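/- arXiv:2210.08805 — 3 statements merged into one kernel-verified Lean document; each statement's English description precedes it below -/
import Mathlib

section
/- Let X be an Archimedean vector lattice. A subspace of codimension 1 in X is a uniformly closed sublattice if and only if it is the kernel of a difference of two real-valued lattice homomorphisms on X. -/
set_option linter.unusedSectionVars false


/-- Relative uniform convergence closedness: `A` is uniformly closed if it contains the
limit of every sequence in `A` that converges relatively uniformly (with regulator `e`). -/
def RUClosed {X : Type*} [AddCommGroup X] [Lattice X] [Module ℝ X] (A : Set X) : Prop :=
  ∀ (x : X) (a : ℕ → X) (e : X), 0 ≤ e → (∀ n, a n ∈ A) →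
    (∀ ε : ℝ, 0 < ε → ∃ N, ∀ n ≥ N, |a n - x| ≤ ε • e) → x ∈ A

/-- A linear functional is order bounded if it is bounded on every order interval. -/
def OrderBoundedFunc {X : Type*} [AddCommGroup X] [Lattice X] [Module ℝ X]
    (φ : X →ₗ[ℝ] ℝ) : Prop :=
  ∀ a b : X, ∃ M : ℝ, ∀ x : X, a ≤ x → x ≤ b → |φ x| ≤ M

/-- A submodule is a (vector) sublattice if it is closed under finite suprema. -/
def IsVectorSublattice {X : Type*} [AddCommGroup X] [Lattice X] [Module ℝ X]
    (Y : Submodule ℝ X) : Prop :=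
  ∀ x ∈ Y, ∀ y ∈ Y, x ⊔ y ∈ Y

/-- A submodule is an order ideal if it is solid. -/
def IsOrderIdeal {X : Type*} [AddCommGroup X] [Lattice X] [Module ℝ X]
    (J : Submodule ℝ X) : Prop :=
  ∀ x y : X, |x| ≤ |y| → y ∈ J → x ∈ J

/-- The Archimedean property for a vector lattice. -/
def ArchimedeanVL (X : Type*) [AddCommGroup X] [Lattice X] [Module ℝ X] : Prop :=
  ∀ x y : X, 0 ≤ x → (∀ n : ℕ, n • x ≤ y) → x = 0

namespace Stmt17Aux

open Set

variable {X : Type*} [AddCommGroup X] [Lattice X]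
    [CovariantClass X X (· + ·) (· ≤ ·)] [Module ℝ X] [PosSMulMono ℝ X]

lemma smul_le_smul_right' {c d : ℝ} {e : X} (h : c ≤ d) (he : 0 ≤ e) : c • e ≤ d • e := by
  have h2 : (0 : X) ≤ (d - c) • e := smul_nonneg (sub_nonneg.2 h) he
  rw [sub_smul, le_sub_iff_add_le, zero_add] at h2
  exact h2

lemma smul_sup_pos {c : ℝ} (hc : 0 < c) (x y : X) : c • (x ⊔ y) = c • x ⊔ c • y :=
  (OrderIso.smulRight hc).map_sup x y

lemma smul_inf_pos {c : ℝ} (hc : 0 < c) (x y : X) : c • (x ⊓ y) = c • x ⊓ c • y :=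
  (OrderIso.smulRight hc).map_inf x y

lemma smul_posPart {c : ℝ} (hc : 0 ≤ c) (x : X) : (c • x)⁺ = c • x⁺ := by
  rcases hc.eq_or_lt with h | h
  · simp [← h]
  · rw [posPart_def, posPart_def, smul_sup_pos h, smul_zero]

lemma smul_negPart {c : ℝ} (hc : 0 ≤ c) (x : X) : (c • x)⁻ = c • x⁻ := by
  rw [← posPart_neg, ← posPart_neg, ← smul_neg, smul_posPart hc]

lemma disj_smul {a b : X} (ha : 0 ≤ a) (hb : 0 ≤ b) (hab : a ⊓ b = 0)
    {c d : ℝ} (hc : 0 < c) (hd : 0 < d) : (c • a) ⊓ (d • b) = 0 := by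
  set m := max c d with hm
  have hm0 : 0 < m := lt_max_of_lt_left hc
  have h1 : c • a ≤ m • a := smul_le_smul_right' (le_max_left _ _) ha
  have h2 : d • b ≤ m • b := smul_le_smul_right' (le_max_right _ _) hb
  refine le_antisymm ?_ (le_inf (smul_nonneg hc.le ha) (smul_nonneg hd.le hb))
  calc (c • a) ⊓ (d • b) ≤ (m • a) ⊓ (m • b) := inf_le_inf h1 h2
    _ = m • (a ⊓ b) := (smul_inf_pos hm0 a b).symm
    _ = 0 := by rw [hab, smul_zero]

lemma posPart_sub_disj {a b : X} (hab : a ⊓ b = 0) : (a - b)⁺ = a := by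
  have h0 : (0 : X) = b - b := (sub_self b).symm
  rw [posPart_def, h0, ← sup_sub]
  have h1 : a ⊓ b + (a ⊔ b) = a + b := inf_add_sup a b
  rw [hab, zero_add] at h1
  rw [h1, add_sub_cancel_right]

/-- upper boundedness of `f` on order intervals `[0, e]`. -/
def UB (f : X →ₗ[ℝ] ℝ) : Prop := ∀ e : X, 0 ≤ e → ∃ M : ℝ, ∀ z : X, 0 ≤ z → z ≤ e → f z ≤ M

noncomputable def pf (f : X →ₗ[ℝ] ℝ) (x : X) : ℝ := sSup (f '' Set.Icc 0 x)

variable {f : X →ₗ[ℝ] ℝ}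

lemma ne_img {x : X} (hx : 0 ≤ x) : (f '' Set.Icc 0 x).Nonempty :=
  ⟨f 0, 0, ⟨le_rfl, hx⟩, rfl⟩

lemma bdd_img (hb : UB f) {x : X} (hx : 0 ≤ x) : BddAbove (f '' Set.Icc 0 x) := by
  obtain ⟨M, hM⟩ := hb x hx
  exact ⟨M, by rintro _ ⟨z, ⟨h1, h2⟩, rfl⟩; exact hM z h1 h2⟩

lemma le_pf (hb : UB f) {z x : X} (h1 : 0 ≤ z) (h2 : z ≤ x) : f z ≤ pf f x :=
  le_csSup (bdd_img hb (h1.trans h2)) ⟨z, ⟨h1, h2⟩, rfl⟩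

lemma pf_le {x : X} (hx : 0 ≤ x) {M : ℝ} (h : ∀ z : X, 0 ≤ z → z ≤ x → f z ≤ M) :
    pf f x ≤ M :=
  csSup_le (ne_img hx) (by rintro _ ⟨z, ⟨h1, h2⟩, rfl⟩; exact h z h1 h2)

lemma pf_nonneg (hb : UB f) {x : X} (hx : 0 ≤ x) : 0 ≤ pf f x := by
  simpa using le_pf hb le_rfl hx

lemma pf_zero : pf f 0 = 0 := by
  simp [pf, Set.Icc_self]

lemma pf_add (hb : UB f) {x y : X} (hx : 0 ≤ x) (hy : 0 ≤ y) :
    pf f (x + y) = pf f x + pf f y := by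
  apply le_antisymm
  · apply pf_le (add_nonneg hx hy)
    intro z h1 h2
    have hz1 : 0 ≤ z ⊓ x := le_inf h1 hx
    have hz2 : z ⊓ x ≤ x := inf_le_right
    have key : z - z ⊓ x = 0 ⊔ (z - x) := by
      rw [sub_eq_add_neg, neg_inf, add_sup, ← sub_eq_add_neg, ← sub_eq_add_neg, sub_self]
    have h3 : (0 : X) ≤ z - z ⊓ x := key ▸ le_sup_left
    have h4 : z - z ⊓ x ≤ y := by
      rw [key]
      exact sup_le hy (sub_le_iff_le_add.2 (h2.trans_eq (add_comm x y)))
    have h5 : f z = f (z ⊓ x) + f (z - z ⊓ x) := by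
      rw [← map_add]; congr 1; abel
    rw [h5]
    exact add_le_add (le_pf hb hz1 hz2) (le_pf hb h3 h4)
  · have step1 : ∀ a : X, 0 ≤ a → a ≤ x → f a + pf f y ≤ pf f (x + y) := by
      intro a ha1 ha2
      have h6 : pf f y ≤ pf f (x + y) - f a := by
        apply pf_le hy
        intro b hb1 hb2
        have h7 := le_pf hb (add_nonneg ha1 hb1) (add_le_add ha2 hb2)
        rw [map_add] at h7
        linarith
      linarith
    have step2 : pf f x ≤ pf f (x + y) - pf f y := by
      apply pf_le hx
      intro a h1 h2
      have := step1 a h1 h2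
      linarith
    linarith

lemma pf_smul (hb : UB f) {c : ℝ} (hc : 0 < c) {x : X} (hx : 0 ≤ x) :
    pf f (c • x) = c * pf f x := by
  apply le_antisymm
  · apply pf_le (smul_nonneg hc.le hx)
    intro z h1 h2
    have h3 : (0 : X) ≤ c⁻¹ • z := smul_nonneg (by positivity) h1
    have h4 : c⁻¹ • z ≤ x := by
      have := smul_le_smul_of_nonneg_left h2 (inv_nonneg.2 hc.le)
      rwa [inv_smul_smul₀ hc.ne'] at this
    have h5 : f z = c * f (c⁻¹ • z) := by
      rw [map_smul, smul_eq_mul, ← mul_assoc, mul_inv_cancel₀ hc.ne', one_mul]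
    rw [h5]
    exact mul_le_mul_of_nonneg_left (le_pf hb h3 h4) hc.le
  · have h6 : pf f x ≤ c⁻¹ * pf f (c • x) := by
      apply pf_le hx
      intro z h1 h2
      have h5 := le_pf hb (smul_nonneg hc.le h1) (smul_le_smul_of_nonneg_left h2 hc.le)
      rw [map_smul, smul_eq_mul] at h5
      calc f z = c⁻¹ * (c * f z) := by rw [← mul_assoc, inv_mul_cancel₀ hc.ne', one_mul]
        _ ≤ c⁻¹ * pf f (c • x) := mul_le_mul_of_nonneg_left h5 (by positivity)
    calc c * pf f x ≤ c * (c⁻¹ * pf f (c • x)) := mul_le_mul_of_nonneg_left h6 hc.le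
      _ = pf f (c • x) := by rw [← mul_assoc, mul_inv_cancel₀ hc.ne', one_mul]

/-- The positive part of `f` via the Riesz–Kantorovich formula. -/
noncomputable def posLM (f : X →ₗ[ℝ] ℝ) (hb : UB f) : X →ₗ[ℝ] ℝ where
  toFun x := pf f x⁺ - pf f x⁻
  map_add' x y := by
    have e1 : (x + y)⁺ + (x⁻ + y⁻) = (x + y)⁻ + (x⁺ + y⁺) := by
      have h := posPart_sub_negPart (x + y)
      have hx' := posPart_sub_negPart x
      have hy' := posPart_sub_negPart y
      apply eq_of_sub_eq_zero
      calc ((x + y)⁺ + (x⁻ + y⁻)) - ((x + y)⁻ + (x⁺ + y⁺))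
          = ((x + y)⁺ - (x + y)⁻) - ((x⁺ - x⁻) + (y⁺ - y⁻)) := by abel
        _ = (x + y) - (x + y) := by rw [h, hx', hy']
        _ = 0 := sub_self _
    have e2 : pf f ((x + y)⁺) + pf f (x⁻ + y⁻) = pf f ((x + y)⁻) + pf f (x⁺ + y⁺) := by
      rw [← pf_add hb (posPart_nonneg _) (add_nonneg (negPart_nonneg _) (negPart_nonneg _)),
        ← pf_add hb (negPart_nonneg _) (add_nonneg (posPart_nonneg _) (posPart_nonneg _)), e1]
    have e3 : pf f (x⁻ + y⁻) = pf f x⁻ + pf f y⁻ :=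
      pf_add hb (negPart_nonneg _) (negPart_nonneg _)
    have e4 : pf f (x⁺ + y⁺) = pf f x⁺ + pf f y⁺ :=
      pf_add hb (posPart_nonneg _) (posPart_nonneg _)
    linarith
  map_smul' c x := by
    simp only [RingHom.id_apply, smul_eq_mul]
    rcases le_or_gt 0 c with hc | hc
    · rcases hc.eq_or_lt with h | h
      · simp [← h, pf_zero]
      · rw [smul_posPart h.le, smul_negPart h.le, pf_smul hb h (posPart_nonneg _),
          pf_smul hb h (negPart_nonneg _)]
        ring
    · have hc' : 0 < -c := by linarith
      have hrw : c • x = (-c) • (-x) := by rw [neg_smul, smul_neg, neg_neg]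
      rw [hrw, smul_posPart hc'.le, smul_negPart hc'.le, posPart_neg, negPart_neg,
        pf_smul hb hc' (negPart_nonneg _), pf_smul hb hc' (posPart_nonneg _)]
      ring

lemma posLM_apply (hb : UB f) (x : X) : posLM f hb x = pf f x⁺ - pf f x⁻ := rfl

lemma posLM_apply_nonneg (hb : UB f) {x : X} (hx : 0 ≤ x) : posLM f hb x = pf f x := by
  rw [posLM_apply, posPart_eq_self.2 hx, negPart_eq_zero.2 hx, pf_zero, sub_zero]

/-- The crux: if the kernel of `f` is a sublattice, we cannot have two disjoint positive
elements on which `f` is positive. -/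
lemma crux (hker : ∀ x y : X, f x = 0 → f y = 0 → f (x ⊔ y) = 0)
    {a b : X} (ha : 0 ≤ a) (hb' : 0 ≤ b) (hab : a ⊓ b = 0)
    (hfa : 0 < f a) (hfb : 0 < f b) : False := by
  set a' := (f a)⁻¹ • a with ha'
  set b' := (f b)⁻¹ • b with hb''
  have ha1 : f a' = 1 := by rw [ha', map_smul, smul_eq_mul, inv_mul_cancel₀ hfa.ne']
  have hb1 : f b' = 1 := by rw [hb'', map_smul, smul_eq_mul, inv_mul_cancel₀ hfb.ne']
  have hd : a' ⊓ b' = 0 := disj_smul ha hb' hab (inv_pos.2 hfa) (inv_pos.2 hfb)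
  have hsub : f (a' - b') = 0 := by rw [map_sub, ha1, hb1, sub_self]
  have h0 : f (0 : X) = 0 := map_zero f
  have hK := hker _ _ hsub h0
  rw [← posPart_def, posPart_sub_disj hd, ha1] at hK
  exact one_ne_zero hK

lemma posLM_latticeHom (hb : UB f)
    (hker : ∀ x y : X, f x = 0 → f y = 0 → f (x ⊔ y) = 0) :
    ∀ x y : X, posLM f hb (x ⊔ y) = max (posLM f hb x) (posLM f hb y) := by
  set φ := posLM f hb with hφ
  have hpos : ∀ z : X, 0 ≤ z → 0 ≤ φ z := by
    intro z hz
    rw [hφ, posLM_apply_nonneg hb hz]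
    exact pf_nonneg hb hz
  have hdisj : ∀ x y : X, 0 ≤ x → 0 ≤ y → x ⊓ y = 0 → φ x = 0 ∨ φ y = 0 := by
    intro x y hx hy hxy
    by_contra hcon
    push_neg at hcon
    obtain ⟨h1, h2⟩ := hcon
    have hx' : 0 < φ x := lt_of_le_of_ne (hpos x hx) (Ne.symm h1)
    have hy' : 0 < φ y := lt_of_le_of_ne (hpos y hy) (Ne.symm h2)
    have hex : ∀ w : X, 0 ≤ w → 0 < φ w → ∃ a : X, 0 ≤ a ∧ a ≤ w ∧ 0 < f a := by
      intro w hw hφw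
      by_contra hc
      push_neg at hc
      have : pf f w ≤ 0 := pf_le hw fun z hz1 hz2 => hc z hz1 hz2
      rw [hφ, posLM_apply_nonneg hb hw] at hφw
      linarith
    obtain ⟨a, ha1, ha2, ha3⟩ := hex x hx hx'
    obtain ⟨b, hb1, hb2, hb3⟩ := hex y hy hy'
    have hab : a ⊓ b = 0 :=
      le_antisymm ((inf_le_inf ha2 hb2).trans hxy.le) (le_inf ha1 hb1)
    exact crux hker ha1 hb1 hab ha3 hb3
  have hmin : ∀ x y : X, 0 ≤ x → 0 ≤ y → φ (x ⊓ y) = min (φ x) (φ y) := by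
    intro x y hx hy
    set m := x ⊓ y with hm
    have ha : (0 : X) ≤ x - m := sub_nonneg.2 inf_le_left
    have hb2 : (0 : X) ≤ y - m := sub_nonneg.2 inf_le_right
    have hab : (x - m) ⊓ (y - m) = 0 := by rw [← inf_sub, hm, sub_self]
    have hxeq : φ x = φ (x - m) + φ m := by rw [← map_add]; congr 1; abel
    have hyeq : φ y = φ (y - m) + φ m := by rw [← map_add]; congr 1; abel
    rcases hdisj _ _ ha hb2 hab with h | h
    · have : φ x = φ m := by rw [hxeq, h, zero_add]
      have h2 : φ x ≤ φ y := by
        rw [this, hyeq]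
        have := hpos _ hb2
        linarith
      rw [min_eq_left h2, ← this]
    · have : φ y = φ m := by rw [hyeq, h, zero_add]
      have h2 : φ y ≤ φ x := by
        rw [this, hxeq]
        have := hpos _ ha
        linarith
      rw [min_eq_right h2, ← this]
  have hsupnn : ∀ x y : X, 0 ≤ x → 0 ≤ y → φ (x ⊔ y) = max (φ x) (φ y) := by
    intro x y hx hy
    have hid : x ⊓ y + (x ⊔ y) = x + y := inf_add_sup x y
    have h1 : φ (x ⊓ y) + φ (x ⊔ y) = φ x + φ y := by rw [← map_add, ← map_add, hid]
    have h2 := hmin x y hx hy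
    have h3 : min (φ x) (φ y) + max (φ x) (φ y) = φ x + φ y := min_add_max _ _
    linarith
  have hpospart : ∀ z : X, φ (z⁺) = max (φ z) 0 := by
    intro z
    have hd := posPart_inf_negPart_eq_zero z
    have hz : φ z = φ z⁺ - φ z⁻ := by
      rw [← map_sub, posPart_sub_negPart]
    rcases hdisj _ _ (posPart_nonneg z) (negPart_nonneg z) hd with h | h
    · have h1 : φ z ≤ 0 := by
        rw [hz, h]
        have := hpos _ (negPart_nonneg z)
        linarith
      rw [h, max_eq_right h1]
    · have h1 : 0 ≤ φ z := by
        rw [hz, h, sub_zero]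
        exact hpos _ (posPart_nonneg z)
      rw [max_eq_left h1, hz, h, sub_zero]
  intro x y
  have hid : x ⊔ y = y + (x - y)⁺ := sup_eq_add_posPart_sub x y
  rw [hid, map_add, hpospart (x - y), map_sub]
  rcases le_total (φ x) (φ y) with h | h
  · rw [max_eq_right (sub_nonpos.2 h), max_eq_right h, add_zero]
  · rw [max_eq_left (sub_nonneg.2 h), max_eq_left h]
    ring

lemma pf_negf (hb : UB f) (hb' : UB (-f)) {z : X} (hz : 0 ≤ z) :
    pf (-f) z = pf f z - f z := by
  apply le_antisymm
  · apply pf_le hz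
    intro w h1 h2
    have h3 : (0 : X) ≤ z - w := sub_nonneg.2 h2
    have h4 : z - w ≤ z := by
      have : z - w ≤ z - 0 := sub_le_sub_left h1 z
      simpa using this
    have h5 := le_pf hb h3 h4
    rw [map_sub] at h5
    simp only [LinearMap.neg_apply]
    linarith
  · rw [sub_le_iff_le_add]
    apply pf_le hz
    intro w h1 h2
    have h3 : (0 : X) ≤ z - w := sub_nonneg.2 h2
    have h4 : z - w ≤ z := by
      have : z - w ≤ z - 0 := sub_le_sub_left h1 z
      simpa using this
    have h5 := le_pf hb' h3 h4
    simp only [LinearMap.neg_apply, map_sub] at h5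
    linarith

lemma posLM_sub (hb : UB f) (hb' : UB (-f)) (x : X) :
    posLM f hb x - posLM (-f) hb' x = f x := by
  rw [posLM_apply, posLM_apply, pf_negf hb hb' (posPart_nonneg x),
    pf_negf hb hb' (negPart_nonneg x)]
  have h : f x⁺ - f x⁻ = f x := by rw [← map_sub, posPart_sub_negPart]
  linarith

/-- RU-closedness of the kernel gives upper order boundedness. -/
lemma ub_of_ruclosed (f : X →ₗ[ℝ] ℝ) (Y : Submodule ℝ X) (hY : ∀ z : X, z ∈ Y ↔ f z = 0)
    (hcl : RUClosed (Y : Set X)) (u : X) (hu : f u = 1) : UB f := by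
  intro e he
  by_contra hcon
  push_neg at hcon
  choose z hz1 hz2 hz3 using fun n : ℕ => hcon n
  have hpos : ∀ n : ℕ, (0 : ℝ) < f (z (n + 1)) :=
    fun n => lt_of_le_of_lt (Nat.cast_nonneg _) (hz3 (n + 1))
  set a : ℕ → X := fun n => u - (f (z (n + 1)))⁻¹ • z (n + 1) with ha
  have hmem : ∀ n, a n ∈ (Y : Set X) := by
    intro n
    have : f (a n) = 0 := by
      rw [ha]
      simp only [map_sub, map_smul, smul_eq_mul, hu]
      rw [inv_mul_cancel₀ (hpos n).ne', sub_self]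
    exact (hY _).2 this
  have hconv : ∀ ε : ℝ, 0 < ε → ∃ N, ∀ n ≥ N, |a n - u| ≤ ε • e := by
    intro ε hε
    obtain ⟨N, hN⟩ := exists_nat_gt ε⁻¹
    refine ⟨N, fun n hn => ?_⟩
    have hfz : ε⁻¹ < f (z (n + 1)) := by
      calc ε⁻¹ < (N : ℝ) := hN
        _ ≤ (n : ℝ) := Nat.cast_le.2 hn
        _ ≤ ((n + 1 : ℕ) : ℝ) := by exact_mod_cast Nat.le_succ n
        _ < f (z (n + 1)) := hz3 (n + 1)
    have h2 : 0 < f (z (n + 1)) := hpos n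
    have hinv : (f (z (n + 1)))⁻¹ ≤ ε := by
      have h4 := mul_lt_mul_of_pos_left hfz hε
      rw [mul_inv_cancel₀ hε.ne'] at h4
      have h6 : (f (z (n + 1)))⁻¹ * 1 ≤ (f (z (n + 1)))⁻¹ * (ε * f (z (n + 1))) :=
        mul_le_mul_of_nonneg_left h4.le (inv_nonneg.2 h2.le)
      rwa [mul_one, mul_comm ε, ← mul_assoc, inv_mul_cancel₀ h2.ne', one_mul] at h6
    have hb0 : (0 : X) ≤ (f (z (n + 1)))⁻¹ • z (n + 1) :=
      smul_nonneg (inv_nonneg.2 h2.le) (hz1 _)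
    have habs : |a n - u| = (f (z (n + 1)))⁻¹ • z (n + 1) := by
      have : a n - u = -((f (z (n + 1)))⁻¹ • z (n + 1)) := by rw [ha]; exact sub_sub_cancel_left _ _
      rw [this, abs_neg, abs_of_nonneg hb0]
    rw [habs]
    calc (f (z (n + 1)))⁻¹ • z (n + 1) ≤ (f (z (n + 1)))⁻¹ • e :=
          smul_le_smul_of_nonneg_left (hz2 _) (inv_nonneg.2 h2.le)
      _ ≤ ε • e := smul_le_smul_right' hinv he
  have := hcl u a e he hmem hconv
  rw [SetLike.mem_coe, hY] at this
  rw [hu] at this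
  exact one_ne_zero this

end Stmt17Aux

theorem stmt17 {X : Type*} [AddCommGroup X] [Lattice X]
    [CovariantClass X X (· + ·) (· ≤ ·)] [Module ℝ X] [PosSMulMono ℝ X] (hArch : ArchimedeanVL X) (Y : Submodule ℝ X)
    (hcodim : Module.finrank ℝ (X ⧸ Y) = 1) :
    (RUClosed (Y : Set X) ∧ IsVectorSublattice Y) ↔
      ∃ φ ψ : X →ₗ[ℝ] ℝ,
        (∀ x y : X, φ (x ⊔ y) = max (φ x) (φ y)) ∧
        (∀ x y : X, ψ (x ⊔ y) = max (ψ x) (ψ y)) ∧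
        Y = LinearMap.ker (φ - ψ) := by
  classical
  constructor
  · rintro ⟨hcl, hsub⟩
    haveI : Module.Finite ℝ (X ⧸ Y) := Module.finite_of_finrank_eq_succ hcodim
    set b : Module.Basis (Fin 1) ℝ (X ⧸ Y) := Module.basisUnique (Fin 1) hcodim with hbdef
    set g : (X ⧸ Y) →ₗ[ℝ] ℝ := b.coord 0 with hgdef
    have hg : ∀ q : X ⧸ Y, g q = 0 → q = 0 := by
      intro q hq
      rw [hgdef, Module.Basis.coord_apply] at hq
      exact (Module.basisUnique_repr_eq_zero_iff.mp hq)
    set f : X →ₗ[ℝ] ℝ := g.comp Y.mkQ with hfdef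
    have hY : ∀ z : X, z ∈ Y ↔ f z = 0 := by
      intro z
      constructor
      · intro hz
        have h1 : Y.mkQ z = 0 := by
          rw [Submodule.mkQ_apply, Submodule.Quotient.mk_eq_zero]
          exact hz
        rw [hfdef, LinearMap.comp_apply, h1, map_zero]
      · intro hz
        have h1 : Y.mkQ z = 0 := hg _ hz
        rwa [Submodule.mkQ_apply, Submodule.Quotient.mk_eq_zero] at h1
    have hexu : ∃ u : X, f u = 1 := by
      haveI : Nontrivial (X ⧸ Y) :=
        Module.nontrivial_of_finrank_pos (R := ℝ) (by rw [hcodim]; norm_num)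
      obtain ⟨q, hq⟩ := exists_ne (0 : X ⧸ Y)
      obtain ⟨x0, rfl⟩ := Y.mkQ_surjective q
      have hfx : f x0 ≠ 0 := by
        intro hc
        exact hq (hg _ hc)
      refine ⟨(f x0)⁻¹ • x0, ?_⟩
      rw [map_smul, smul_eq_mul, inv_mul_cancel₀ hfx]
    obtain ⟨u, hu⟩ := hexu
    have hbf : Stmt17Aux.UB f := Stmt17Aux.ub_of_ruclosed f Y hY hcl u hu
    have hbnf : Stmt17Aux.UB (-f) := by
      refine Stmt17Aux.ub_of_ruclosed (-f) Y ?_ hcl (-u) ?_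
      · intro z
        rw [hY]
        simp
      · simp [hu]
    have hker : ∀ x y : X, f x = 0 → f y = 0 → f (x ⊔ y) = 0 := by
      intro x y hx hy
      exact (hY _).1 (hsub x ((hY x).2 hx) y ((hY y).2 hy))
    have hkerneg : ∀ x y : X, (-f) x = 0 → (-f) y = 0 → (-f) (x ⊔ y) = 0 := by
      intro x y hx hy
      simp only [LinearMap.neg_apply, neg_eq_zero] at hx hy ⊢
      exact hker x y hx hy
    refine ⟨Stmt17Aux.posLM f hbf, Stmt17Aux.posLM (-f) hbnf,
      Stmt17Aux.posLM_latticeHom hbf hker, Stmt17Aux.posLM_latticeHom hbnf hkerneg, ?_⟩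
    ext x
    rw [LinearMap.mem_ker, LinearMap.sub_apply, Stmt17Aux.posLM_sub hbf hbnf x, hY]
  · rintro ⟨φ, ψ, hφ, hψ, rfl⟩
    have hφpos : ∀ z : X, 0 ≤ z → 0 ≤ φ z := by
      intro z hz
      have h := hφ z 0
      rw [sup_eq_left.2 hz, map_zero] at h
      rw [h]
      exact le_max_right _ _
    have hψpos : ∀ z : X, 0 ≤ z → 0 ≤ ψ z := by
      intro z hz
      have h := hψ z 0
      rw [sup_eq_left.2 hz, map_zero] at h
      rw [h]
      exact le_max_right _ _
    have hφmono : ∀ z w : X, z ≤ w → φ z ≤ φ w := by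
      intro z w h
      have h2 := hφ z w
      rw [sup_eq_right.2 h] at h2
      rw [h2]
      exact le_max_left _ _
    have hψmono : ∀ z w : X, z ≤ w → ψ z ≤ ψ w := by
      intro z w h
      have h2 := hψ z w
      rw [sup_eq_right.2 h] at h2
      rw [h2]
      exact le_max_left _ _
    have habsX : ∀ z : X, |z| = z ⊔ (-z) := fun z => rfl
    have hφabs : ∀ z : X, |φ z| = φ |z| := by
      intro z
      rw [habsX, hφ, map_neg, abs_eq_max_neg]
    have hψabs : ∀ z : X, |ψ z| = ψ |z| := by
      intro z
      rw [habsX, hψ, map_neg, abs_eq_max_neg]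
    constructor
    · intro x a e he hmem hconv
      rw [SetLike.mem_coe, LinearMap.mem_ker, LinearMap.sub_apply]
      have key : ∀ ε : ℝ, 0 < ε → |φ x - ψ x| ≤ ε * (φ e + ψ e) := by
        intro ε hε
        obtain ⟨N, hN⟩ := hconv ε hε
        have h1 : |a N - x| ≤ ε • e := hN N le_rfl
        have h2 : φ (a N) - ψ (a N) = 0 := by
          have h3 := hmem N
          rw [SetLike.mem_coe, LinearMap.mem_ker, LinearMap.sub_apply] at h3
          exact h3
        have h3 : |φ (a N - x)| ≤ ε * φ e := by
          rw [hφabs]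
          calc φ |a N - x| ≤ φ (ε • e) := hφmono _ _ h1
            _ = ε * φ e := by rw [map_smul, smul_eq_mul]
        have h4 : |ψ (a N - x)| ≤ ε * ψ e := by
          rw [hψabs]
          calc ψ |a N - x| ≤ ψ (ε • e) := hψmono _ _ h1
            _ = ε * ψ e := by rw [map_smul, smul_eq_mul]
        have h5 : φ x - ψ x = ψ (a N - x) - φ (a N - x) := by
          rw [map_sub, map_sub]
          linarith
        have h6 : |ψ (a N - x) - φ (a N - x)| ≤ |ψ (a N - x)| + |φ (a N - x)| := by
          rw [sub_eq_add_neg]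
          calc |ψ (a N - x) + -(φ (a N - x))| ≤ |ψ (a N - x)| + |-(φ (a N - x))| :=
                abs_add_le _ _
            _ = |ψ (a N - x)| + |φ (a N - x)| := by rw [abs_neg]
        rw [h5]
        calc |ψ (a N - x) - φ (a N - x)| ≤ |ψ (a N - x)| + |φ (a N - x)| := h6
          _ ≤ ε * ψ e + ε * φ e := add_le_add h4 h3
          _ = ε * (φ e + ψ e) := by ring
      have hC : 0 ≤ φ e + ψ e := add_nonneg (hφpos e he) (hψpos e he)
      by_contra hne
      have hv : 0 < |φ x - ψ x| := abs_pos.2 hne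
      set C := φ e + ψ e with hCdef
      have hk := key (|φ x - ψ x| / (2 * (C + 1))) (by positivity)
      have hlt : |φ x - ψ x| / (2 * (C + 1)) * C < |φ x - ψ x| := by
        rw [div_mul_eq_mul_div, div_lt_iff₀ (by positivity)]
        nlinarith
      linarith
    · intro x hx y hy
      rw [LinearMap.mem_ker, LinearMap.sub_apply] at hx hy ⊢
      rw [hφ, hψ]
      have h1 : φ x = ψ x := by linarith
      have h2 : φ y = ψ y := by linarith
      rw [h1, h2, sub_self]
end

section
/- Every uniformly closed sublattice of codimension n in an Archimedean vector lattice contains a uniformly closed order ideal of codimension at most 2n. -/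
set_option linter.unusedSectionVars false
set_option synthInstance.maxHeartbeats 1000000
set_option maxHeartbeats 1000000

namespace VL18

variable {X : Type*} [AddCommGroup X] [Lattice X]
  [CovariantClass X X (· + ·) (· ≤ ·)] [Module ℝ X] [PosSMulMono ℝ X]

/-- A convenient bundled order instance (order and algebra are the given ones). -/
def locOrd : IsOrderedAddMonoid X :=
  { add_le_add_left := fun a b h c => by
      rw [add_comm a, add_comm b]; exact CovariantClass.elim c h }

attribute [local instance] locOrd

lemma smul_mono_l {c : ℝ} {a b : X} (hc : 0 ≤ c) (h : a ≤ b) : c • a ≤ c • b :=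
  smul_le_smul_of_nonneg_left h hc

lemma smul_nn {c : ℝ} {a : X} (hc : 0 ≤ c) (ha : 0 ≤ a) : 0 ≤ c • a := by
  simpa using smul_mono_l hc ha

lemma smul_mono_r {s t : ℝ} {a : X} (h : s ≤ t) (ha : 0 ≤ a) : s • a ≤ t • a := by
  have h0 : 0 ≤ (t - s) • a := smul_nn (by linarith) ha
  rw [sub_smul, sub_nonneg] at h0
  exact h0

lemma smul_sup' {c : ℝ} (hc : 0 ≤ c) (a b : X) : c • (a ⊔ b) = (c • a) ⊔ (c • b) := by
  rcases eq_or_lt_of_le hc with h | h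
  · simp [← h]
  · refine le_antisymm ?_ (sup_le (smul_mono_l hc le_sup_left) (smul_mono_l hc le_sup_right))
    have h1 : a ⊔ b ≤ c⁻¹ • ((c • a) ⊔ (c • b)) := by
      refine sup_le ?_ ?_
      · have := smul_mono_l (le_of_lt (inv_pos.2 h)) (le_sup_left : c • a ≤ (c • a) ⊔ (c • b))
        rwa [smul_smul, inv_mul_cancel₀ (ne_of_gt h), one_smul] at this
      · have := smul_mono_l (le_of_lt (inv_pos.2 h)) (le_sup_right : c • b ≤ (c • a) ⊔ (c • b))
        rwa [smul_smul, inv_mul_cancel₀ (ne_of_gt h), one_smul] at this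
    have := smul_mono_l hc h1
    rwa [smul_smul, mul_inv_cancel₀ (ne_of_gt h), one_smul] at this

lemma smul_inf' {c : ℝ} (hc : 0 ≤ c) (a b : X) : c • (a ⊓ b) = (c • a) ⊓ (c • b) := by
  have h := smul_sup' hc (-a) (-b)
  have : c • (a ⊓ b) = - (c • ((-a) ⊔ (-b))) := by
    rw [← smul_neg]; congr 1
    rw [neg_sup, neg_neg, neg_neg]
  rw [this, h, neg_sup, smul_neg, smul_neg, neg_neg, neg_neg]

lemma posP_of_nn {a : X} (h : 0 ≤ a) : a⁺ = a := posPart_eq_self.2 h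

lemma posP_smul {c : ℝ} (hc : 0 ≤ c) (a : X) : (c • a)⁺ = c • a⁺ := by
  rw [posPart_def, posPart_def, smul_sup' hc, smul_zero]

lemma abs_smul' (c : ℝ) (a : X) : |c • a| = |c| • |a| := by
  rcases le_or_gt 0 c with h | h
  · rw [abs_of_nonneg h]
    show |c • a| = c • |a|
    rw [abs, abs, smul_sup' h, smul_neg]
  · rw [abs_of_neg h]
    have : c • a = (-c) • (-a) := by rw [smul_neg, neg_smul, neg_neg]
    rw [this, abs, abs, smul_sup' (by linarith : (0:ℝ) ≤ -c), smul_neg, neg_neg, sup_comm]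

lemma abs_le_of {a c : X} (h1 : a ≤ c) (h2 : -a ≤ c) : |a| ≤ c := sup_le h1 h2

lemma abs_eq_zero' {a : X} (h : |a| ≤ 0) : a = 0 := by
  have h1 : a ≤ 0 := le_trans (le_abs_self a) h
  have h2 : -a ≤ 0 := le_trans (neg_le_abs a) h
  have h2' : 0 ≤ a := by simpa using neg_nonneg.2 h2
  exact le_antisymm h1 h2'

lemma posP_le_abs (a : X) : a⁺ ≤ |a| :=
  sup_le (le_abs_self a) (abs_nonneg a)

lemma negP_eq (a : X) : a⁻ = (-a)⁺ := by rw [negPart_def, posPart_def]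

lemma negP_le_abs (a : X) : a⁻ ≤ |a| := by
  rw [negP_eq]
  calc (-a)⁺ ≤ |(-a)| := posP_le_abs (-a)
    _ = |a| := abs_neg a

lemma sub_posP_inf (a b : X) : a - (a - b)⁺ = a ⊓ b :=
  (inf_eq_sub_posPart_sub a b).symm

lemma posP_le_add (a b : X) : a⁺ ≤ b⁺ + (a - b)⁺ := by
  have h1 : a ≤ b⁺ + (a - b)⁺ := by
    calc a = b + (a - b) := by abel
    _ ≤ b⁺ + (a - b)⁺ := add_le_add (le_posPart b) (le_posPart (a - b))
  rw [posPart_def]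
  exact sup_le h1 (add_nonneg (posPart_nonneg b) (posPart_nonneg (a - b)))

lemma posP_add_le (a b : X) : (a + b)⁺ ≤ a⁺ + b⁺ := by
  rw [posPart_def]
  exact sup_le (add_le_add (le_posPart a) (le_posPart b))
    (add_nonneg (posPart_nonneg a) (posPart_nonneg b))

lemma inf_nn {a b : X} (ha : 0 ≤ a) (hb : 0 ≤ b) : 0 ≤ a ⊓ b := le_inf ha hb

lemma add_inf_le {a b c : X} (hb : 0 ≤ b) (ha : 0 ≤ a) (hc : 0 ≤ c) :
    (a + b) ⊓ c ≤ a ⊓ c + b ⊓ c := by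
  have h1 : (a + b) ⊓ c ≤ (a ⊓ c + b) ⊓ (a ⊓ c + c) := by
    refine le_inf ?_ ?_
    · have : (a + b) ⊓ c ≤ (a + b) ⊓ (c + b) :=
        inf_le_inf_left _ (le_add_of_nonneg_right hb)
      rwa [← inf_add] at this
    · exact le_trans inf_le_right (le_add_of_nonneg_left (inf_nn ha hc))
  rwa [← add_inf] at h1

lemma scaledInf {s r : ℝ} {a b : X} (hs : 0 ≤ s) (hr : 0 ≤ r) (ha : 0 ≤ a) (hb : 0 ≤ b) :
    (s • a) ⊓ (r • b) ≤ (max s r) • (a ⊓ b) := by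
  rw [smul_inf' (le_trans hs (le_max_left s r))]
  exact inf_le_inf (smul_mono_r (le_max_left s r) ha) (smul_mono_r (le_max_right s r) hb)

/-- key truncation estimates. -/
lemma trunc_est (y c : X) (hc : 0 ≤ c) :
    |((y ⊔ (-c)) ⊓ c) - y| ≤ (|y| - c)⁺ ∧ |(y ⊔ (-c)) ⊓ c| ≤ c := by
  set b := (y ⊔ (-c)) ⊓ c with hb
  have hposdef : ∀ z : X, (0:X) ⊔ z = z⁺ := fun z => by rw [posPart_def, sup_comm]
  constructor
  · have hm : b - y = (0 ⊔ ((-c) - y)) ⊓ (c - y) := by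
      rw [hb, inf_sub, sup_sub, sub_self]
    have h1 : b - y ≤ (|y| - c)⁺ := by
      have : b - y ≤ 0 ⊔ ((-c) - y) := hm ▸ inf_le_left
      rw [hposdef] at this
      refine le_trans this (posPart_mono ?_)
      have hy : -y ≤ |y| := neg_le_abs y
      calc (-c) - y = -y - c := by abel
        _ ≤ |y| - c := sub_le_sub_right hy c
    have h2 : -(b - y) ≤ (|y| - c)⁺ := by
      have hm2 : y - b = (0 ⊓ (y + c)) ⊔ (y - c) := by
        rw [hb, sub_inf, sub_sup, sub_self, sub_neg_eq_add]
      have h3 : y - b ≤ 0 ⊔ (y - c) := by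
        rw [hm2]; exact sup_le_sup_right inf_le_left _
      rw [neg_sub]
      rw [hposdef] at h3
      exact le_trans h3 (posPart_mono (sub_le_sub_right (le_abs_self y) c))
    exact abs_le_of h1 h2
  · refine abs_le_of inf_le_right ?_
    have h1 : -c ≤ b := le_inf le_sup_right (neg_le_self hc)
    have h2 := neg_le_neg h1
    simpa using h2

/-- Riesz decomposition via truncation. -/
lemma riesz {x1 x2 y : X} (h : |y| ≤ |x1| + |x2|) :
    ∃ y1 y2 : X, y = y1 + y2 ∧ |y1| ≤ |x1| ∧ |y2| ≤ |x2| := by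
  set y1 := (y ⊔ (-|x1|)) ⊓ |x1| with hy1
  obtain ⟨ha, hbnd⟩ := trunc_est y |x1| (abs_nonneg x1)
  refine ⟨y1, y - y1, (add_sub_cancel y1 y).symm, hbnd, ?_⟩
  have : |y - y1| = |y1 - y| := by rw [← abs_neg, neg_sub]
  rw [this]
  refine le_trans ha ?_
  have h1 : |y| - |x1| ≤ |x2| := by
    have h2 : |y| ≤ |x2| + |x1| := by rwa [add_comm] at h
    exact sub_le_iff_le_add.2 h2
  calc (|y| - |x1|)⁺ ≤ (|x2|)⁺ := posPart_mono h1
    _ = |x2| := posP_of_nn (abs_nonneg x2)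

lemma P10 {a b x : X} (ha : 0 ≤ a) (hb : 0 ≤ b) (hx : 0 ≤ x) :
    (a + b - x)⁺ ≤ (a - x)⁺ + (b - x)⁺ + a ⊓ b := by
  have h1 : a + b - x ≤ (a-x)⁺ + b := by
    have he : a + b - x = (a - x) + b := by abel
    rw [he]; exact add_le_add_left (le_posPart _) b
  have h2 : a + b - x ≤ a + (b-x)⁺ := by
    have he : a + b - x = a + (b - x) := by abel
    rw [he]; exact add_le_add_right (le_posPart _) a
  have h5 : (a+b-x)⁺ ≤ ((a-x)⁺ + b) ⊓ (a + (b-x)⁺) := by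
    rw [posPart_def]
    exact sup_le (le_inf h1 h2)
      (le_inf (add_nonneg (posPart_nonneg _) hb) (add_nonneg ha (posPart_nonneg _)))
  have h6 : ((a-x)⁺ + b) ⊓ (a + (b-x)⁺)
      = (a-x)⁺ + (b-x)⁺ + ((b - (b-x)⁺) ⊓ (a - (a-x)⁺)) := by
    rw [add_inf]
    congr 1 <;> abel
  have h7 : (b - (b-x)⁺) ⊓ (a - (a-x)⁺) ≤ a ⊓ b := by
    rw [sub_posP_inf, sub_posP_inf]
    exact le_inf (le_trans inf_le_right inf_le_left) (le_trans inf_le_left inf_le_left)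
  calc (a+b-x)⁺ ≤ ((a-x)⁺ + b) ⊓ (a + (b-x)⁺) := h5
    _ = (a-x)⁺ + (b-x)⁺ + ((b - (b-x)⁺) ⊓ (a - (a-x)⁺)) := h6
    _ ≤ (a-x)⁺ + (b-x)⁺ + (a ⊓ b) := add_le_add_right h7 _

lemma sum_inf_le {ι : Type*} (s : Finset ι) (f : ι → X) (c : X)
    (hf : ∀ i ∈ s, 0 ≤ f i) (hc : 0 ≤ c) : (∑ i ∈ s, f i) ⊓ c ≤ ∑ i ∈ s, f i ⊓ c := by
  classical
  revert hf
  refine Finset.induction_on s ?_ ?_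
  · intro _
    simp only [Finset.sum_empty]
    exact inf_le_left
  · intro a s ha ih hf
    rw [Finset.sum_insert ha, Finset.sum_insert ha]
    have hfa := hf a (Finset.mem_insert_self a s)
    have hfs : ∀ i ∈ s, 0 ≤ f i := fun i hi => hf i (Finset.mem_insert_of_mem hi)
    have hsum : 0 ≤ ∑ i ∈ s, f i := Finset.sum_nonneg hfs
    exact le_trans (add_inf_le hsum hfa hc) (add_le_add_right (ih hfs) _)

variable (Y : Submodule ℝ X)

/-- The largest order ideal contained in `Y`. -/
def mJ : Submodule ℝ X where
  carrier := {x | ∀ y : X, |y| ≤ |x| → y ∈ Y}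
  zero_mem' := by
    intro y hy
    have hy0 : y = 0 := abs_eq_zero' (by simpa using hy)
    rw [hy0]; exact Y.zero_mem
  add_mem' := by
    intro a b ha hb y hy
    have h' : |y| ≤ |a| + |b| := le_trans hy (abs_add_le a b)
    obtain ⟨y1, y2, rfl, h1, h2⟩ := riesz h'
    exact Y.add_mem (ha y1 h1) (hb y2 h2)
  smul_mem' := by
    intro c x hx y hy
    rcases eq_or_ne c 0 with rfl | hc
    · rw [zero_smul] at hy
      have hy0 : y = 0 := abs_eq_zero' (by simpa using hy)
      rw [hy0]; exact Y.zero_mem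
    · have hc' : (0:ℝ) < |c| := abs_pos.2 hc
      have h1 : |c⁻¹ • y| ≤ |x| := by
        rw [abs_smul'] at hy
        rw [abs_smul', abs_inv]
        have h2 := smul_mono_l (by positivity : (0:ℝ) ≤ |c⁻¹|) hy
        rwa [smul_smul, abs_inv, inv_mul_cancel₀ (ne_of_gt hc'), one_smul] at h2
      have h2 : c⁻¹ • y ∈ Y := hx (c⁻¹ • y) h1
      have h3 := Y.smul_mem c h2
      rwa [smul_smul, mul_inv_cancel₀ hc, one_smul] at h3

lemma mem_mJ {x : X} : x ∈ mJ Y ↔ ∀ y : X, |y| ≤ |x| → y ∈ Y := by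
  constructor <;> intro h <;> exact h

lemma mJ_le : mJ Y ≤ Y := fun x hx => ((mem_mJ Y).1 hx) x le_rfl

lemma mJ_ideal : IsOrderIdeal (mJ Y) := fun x y hxy hy =>
  (mem_mJ Y).2 fun z hz => ((mem_mJ Y).1 hy) z (le_trans hz hxy)

lemma mJ_solid' {a b : X} (ha : 0 ≤ a) (hab : a ≤ b) (hb : b ∈ mJ Y) : a ∈ mJ Y :=
  mJ_ideal Y a b (by rw [abs_of_nonneg ha]; exact le_trans hab (le_abs_self b)) hb

lemma mJ_abs_mem {j : X} (hj : j ∈ mJ Y) : |j| ∈ mJ Y :=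
  mJ_ideal Y (|j|) j (by rw [abs_abs]) hj

lemma mJ_RUClosed (hY : RUClosed (Y : Set X)) : RUClosed ((mJ Y : Submodule ℝ X) : Set X) := by
  intro x a e he ha hconv
  rw [SetLike.mem_coe, mem_mJ]
  intro y hy
  refine hY y (fun m => (y ⊔ (-(|a m|))) ⊓ |a m|) e he ?_ ?_
  · intro m
    exact ((mem_mJ Y).1 (ha m)) _ (trunc_est y (|a m|) (abs_nonneg _)).2
  · intro ε hε
    obtain ⟨N, hN⟩ := hconv ε hε
    refine ⟨N, fun m hm => ?_⟩
    have h1 := (trunc_est y (|a m|) (abs_nonneg (a m))).1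
    have h2 : (|y| - |a m|)⁺ ≤ (|x| - |a m|)⁺ := posPart_mono (sub_le_sub_right hy _)
    have h3 : |x| - |a m| ≤ |x - a m| := by
      have h4 : |x| ≤ |x - a m| + |a m| := by
        calc |x| = |(x - a m) + a m| := by congr 1; abel
          _ ≤ |x - a m| + |a m| := abs_add_le _ _
      exact sub_le_iff_le_add.2 h4
    have h5 : (|x| - |a m|)⁺ ≤ |x - a m| := by
      calc (|x| - |a m|)⁺ ≤ (|x - a m|)⁺ := posPart_mono h3
        _ = |x - a m| := posP_of_nn (abs_nonneg _)
    have h7 : |x - a m| = |a m - x| := by rw [← abs_neg, neg_sub]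
    exact le_trans h1 (le_trans h2 (le_trans h5 (by rw [h7]; exact hN m hm)))

lemma ruJ (hY : RUClosed (Y : Set X)) {a e : X} (ha : 0 ≤ a) (he : 0 ≤ e)
    (h : ∀ ε : ℝ, 0 < ε → (a - ε • e)⁺ ∈ mJ Y) : a ∈ mJ Y := by
  refine mJ_RUClosed Y hY a (fun m => (a - ((1:ℝ)/(m+1)) • e)⁺) e he
    (fun m => h _ (by positivity)) ?_
  intro ε hε
  obtain ⟨N, hN⟩ := exists_nat_one_div_lt hε
  refine ⟨N, fun m hm => ?_⟩
  have hδ : (0:ℝ) < 1/((m:ℝ)+1) := by positivity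
  have h1 : a - (a - ((1:ℝ)/(m+1)) • e)⁺ = a ⊓ (((1:ℝ)/(m+1)) • e) := sub_posP_inf a _
  have h2 : |(a - ((1:ℝ)/(m+1)) • e)⁺ - a| = a ⊓ (((1:ℝ)/(m+1)) • e) := by
    rw [← abs_neg, neg_sub, h1]
    exact abs_of_nonneg (inf_nn ha (smul_nn (le_of_lt hδ) he))
  rw [h2]
  have h3 : ((1:ℝ)/((m:ℝ)+1)) ≤ 1/((N:ℝ)+1) := by
    apply one_div_le_one_div_of_le (by positivity)
    have hm' : (N:ℝ) ≤ m := by exact_mod_cast hm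
    linarith
  calc a ⊓ (((1:ℝ)/(m+1)) • e) ≤ ((1:ℝ)/(m+1)) • e := inf_le_right
    _ ≤ ε • e := smul_mono_r (le_trans h3 (le_of_lt hN)) he

lemma getT (hY : RUClosed (Y : Set X)) {x w : X} (hx : 0 ≤ x) (hw : 0 ≤ w) (hwJ : w ∉ mJ Y) :
    ∃ t : ℝ, 0 ≤ t ∧ (t • w - x)⁺ ∈ mJ Y ∧
      ∀ s : ℝ, 0 < s → ((t + s) • w - x)⁺ ∉ mJ Y := by
  classical
  set D := {t : ℝ | 0 ≤ t ∧ (t • w - x)⁺ ∈ mJ Y} with hD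
  have hD0 : (0:ℝ) ∈ D := by
    refine ⟨le_rfl, ?_⟩
    have h0 : ((0:ℝ) • w - x)⁺ = 0 := by
      rw [zero_smul, zero_sub]
      exact posPart_eq_zero.2 (neg_nonpos.2 hx)
    rw [h0]; exact (mJ Y).zero_mem
  have hbdd : BddAbove D := by
    by_contra hb
    have hkey : ∀ ε : ℝ, 0 < ε → (w - ε • x)⁺ ∈ mJ Y := by
      intro ε hε
      obtain ⟨t, htD, htgt⟩ := not_bddAbove_iff.1 hb (1/ε)
      have ht0 : (0:ℝ) < t := lt_of_le_of_lt (by positivity) htgt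
      have hinv : t⁻¹ ≤ ε := by
        rw [← one_div]
        rw [div_le_iff₀ ht0]
        rw [div_lt_iff₀ hε] at htgt
        nlinarith
      have h1 : w - ε • x ≤ w - t⁻¹ • x :=
        sub_le_sub_left (smul_mono_r hinv hx) w
      have h2 : (w - t⁻¹ • x)⁺ = t⁻¹ • ((t • w - x)⁺) := by
        rw [← posP_smul (by positivity : (0:ℝ) ≤ t⁻¹)]
        congr 1
        rw [smul_sub, smul_smul, inv_mul_cancel₀ (ne_of_gt ht0), one_smul]
      have h3 : (w - t⁻¹ • x)⁺ ∈ mJ Y := by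
        rw [h2]; exact (mJ Y).smul_mem _ htD.2
      exact mJ_solid' Y (posPart_nonneg _) (posPart_mono h1) h3
    exact hwJ (ruJ Y hY hw hx hkey)
  have hT0 : 0 ≤ sSup D := le_csSup hbdd hD0
  refine ⟨sSup D, hT0, ?_, ?_⟩
  · apply ruJ Y hY (posPart_nonneg _) hw
    intro ε hε
    obtain ⟨s, hsD, hs⟩ := exists_lt_of_lt_csSup ⟨0, hD0⟩
      (show sSup D - ε < sSup D by linarith)
    have hsle : s ≤ sSup D := le_csSup hbdd hsD
    have h1 : (sSup D • w - x)⁺ ≤ (s • w - x)⁺ + (sSup D - s) • w := by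
      have h0 := posP_le_add (sSup D • w - x) (s • w - x)
      have he : (sSup D • w - x) - (s • w - x) = (sSup D - s) • w := by
        rw [sub_smul]; abel
      rw [he] at h0
      rwa [posP_of_nn (smul_nn (by linarith) hw)] at h0
    have h2 : (sSup D - s) • w ≤ ε • w := smul_mono_r (by linarith) hw
    have h3 : (sSup D • w - x)⁺ - ε • w ≤ (s • w - x)⁺ := by
      have := le_trans h1 (add_le_add_right h2 _)
      exact sub_le_iff_le_add.2 this
    have h4 : ((sSup D • w - x)⁺ - ε • w)⁺ ≤ (s • w - x)⁺ := by
      calc ((sSup D • w - x)⁺ - ε • w)⁺ ≤ ((s • w - x)⁺)⁺ := posPart_mono h3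
        _ = (s • w - x)⁺ := posP_of_nn (posPart_nonneg _)
    exact mJ_solid' Y (posPart_nonneg _) h4 hsD.2
  · intro s hs hmem
    have hin : sSup D + s ∈ D := ⟨by linarith, hmem⟩
    have := le_csSup hbdd hin
    linarith

lemma F2 (hY : RUClosed (Y : Set X)) {u v : X} (hu : 0 ≤ u) (hv : 0 ≤ v) (huJ : u ∉ mJ Y)
    (htot : ∀ r : ℝ, (v - r • u)⁺ ∈ mJ Y ∨ (v - r • u)⁻ ∈ mJ Y) :
    ∃ s : ℝ, 0 ≤ s ∧ v - s • u ∈ mJ Y := by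
  classical
  set T := {r : ℝ | (v - r • u)⁺ ∈ mJ Y} with hTdef
  have hTlb : ∀ r ∈ T, (0:ℝ) ≤ r := by
    intro r hr
    by_contra hneg
    push_neg at hneg
    have h1 : (-r) • u ≤ (v - r • u)⁺ := by
      refine le_trans ?_ (le_posPart _)
      rw [sub_eq_add_neg, ← neg_smul]
      exact le_add_of_nonneg_left hv
    have h2 : (-r) • u ∈ mJ Y :=
      mJ_solid' Y (smul_nn (by linarith) hu) h1 hr
    have h3 := (mJ Y).smul_mem (-r)⁻¹ h2
    rw [smul_smul, inv_mul_cancel₀ (by linarith), one_smul] at h3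
    exact huJ h3
  have hTne : T.Nonempty := by
    by_contra hne
    rw [Set.not_nonempty_iff_eq_empty] at hne
    have hS : ∀ r : ℝ, (v - r • u)⁻ ∈ mJ Y := by
      intro r
      rcases htot r with h | h
      · exact absurd (show r ∈ T from h) (by rw [hne]; exact Set.notMem_empty r)
      · exact h
    have hkey : ∀ ε : ℝ, 0 < ε → (u - ε • v)⁺ ∈ mJ Y := by
      intro ε hε
      have h1 := hS (1/ε)
      rw [negP_eq, neg_sub] at h1
      have h2 : (u - ε • v)⁺ = ε • (((1/ε) • u - v)⁺) := by
        rw [← posP_smul (le_of_lt hε)]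
        congr 1
        rw [smul_sub, smul_smul]
        rw [mul_one_div, div_self (ne_of_gt hε), one_smul]
      rw [h2]
      exact (mJ Y).smul_mem _ h1
    exact huJ (ruJ Y hY hu hv hkey)
  have hbddb : BddBelow T := ⟨0, hTlb⟩
  have ht0 : 0 ≤ sInf T := le_csInf hTne hTlb
  have hA : (v - sInf T • u)⁺ ∈ mJ Y := by
    apply ruJ Y hY (posPart_nonneg _) hu
    intro ε hε
    obtain ⟨r, hrT, hr⟩ := exists_lt_of_csInf_lt hTne (show sInf T < sInf T + ε by linarith)
    have hrge : sInf T ≤ r := csInf_le hbddb hrT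
    have h1 : (v - sInf T • u)⁺ ≤ (v - r • u)⁺ + (r - sInf T) • u := by
      have h0 := posP_le_add (v - sInf T • u) (v - r • u)
      have he : (v - sInf T • u) - (v - r • u) = (r - sInf T) • u := by
        rw [sub_smul]; abel
      rw [he] at h0
      rwa [posP_of_nn (smul_nn (by linarith) hu)] at h0
    have h2 : (r - sInf T) • u ≤ ε • u := smul_mono_r (by linarith) hu
    have h3 : ((v - sInf T • u)⁺ - ε • u)⁺ ≤ (v - r • u)⁺ := by
      have h4 := le_trans h1 (add_le_add_right h2 _)
      have h5 : (v - sInf T • u)⁺ - ε • u ≤ (v - r • u)⁺ := sub_le_iff_le_add.2 h4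
      calc ((v - sInf T • u)⁺ - ε • u)⁺ ≤ ((v - r • u)⁺)⁺ := posPart_mono h5
        _ = (v - r • u)⁺ := posP_of_nn (posPart_nonneg _)
    exact mJ_solid' Y (posPart_nonneg _) h3 hrT
  have hB : (v - sInf T • u)⁻ ∈ mJ Y := by
    rw [negP_eq, neg_sub]
    apply ruJ Y hY (posPart_nonneg _) hu
    intro ε hε
    have hrS : (v - (sInf T - ε) • u)⁻ ∈ mJ Y := by
      rcases htot (sInf T - ε) with h | h
      · exfalso
        have := csInf_le hbddb (show sInf T - ε ∈ T from h)
        linarith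
      · exact h
    rw [negP_eq, neg_sub] at hrS
    have h1 : (sInf T • u - v)⁺ ≤ ((sInf T - ε) • u - v)⁺ + ε • u := by
      have h0 := posP_le_add (sInf T • u - v) ((sInf T - ε) • u - v)
      have he : (sInf T • u - v) - ((sInf T - ε) • u - v) = ε • u := by
        rw [sub_smul]; abel
      rw [he] at h0
      rwa [posP_of_nn (smul_nn (le_of_lt hε) hu)] at h0
    have h3 : ((sInf T • u - v)⁺ - ε • u)⁺ ≤ ((sInf T - ε) • u - v)⁺ := by
      have h5 : (sInf T • u - v)⁺ - ε • u ≤ ((sInf T - ε) • u - v)⁺ := sub_le_iff_le_add.2 h1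
      calc ((sInf T • u - v)⁺ - ε • u)⁺ ≤ (((sInf T - ε) • u - v)⁺)⁺ := posPart_mono h5
        _ = ((sInf T - ε) • u - v)⁺ := posP_of_nn (posPart_nonneg _)
    exact mJ_solid' Y (posPart_nonneg _) h3 hrS
  refine ⟨sInf T, ht0, ?_⟩
  have := sub_mem hA hB
  rwa [posPart_sub_negPart] at this

/-- sums of almost-disjoint pieces stay in `mJ` after truncation. -/
lemma sumP {E : Finset X} {t : X → ℝ} {x : X} (hx : 0 ≤ x)
    (hw : ∀ w ∈ E, 0 ≤ w) (ht : ∀ w ∈ E, 0 ≤ t w)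
    (hterm : ∀ w ∈ E, (t w • w - x)⁺ ∈ mJ Y)
    (hpair : ∀ w ∈ E, ∀ w' ∈ E, w ≠ w' → w ⊓ w' ∈ mJ Y) :
    ((∑ w ∈ E, t w • w) - x)⁺ ∈ mJ Y := by
  classical
  revert hw ht hterm hpair
  refine Finset.induction_on E ?_ ?_
  · intro _ _ _ _
    simp only [Finset.sum_empty, zero_sub]
    rw [posPart_eq_zero.2 (neg_nonpos.2 hx)]
    exact (mJ Y).zero_mem
  · intro a s has ih hw ht hterm hpair
    have hwa : 0 ≤ a := hw a (Finset.mem_insert_self a s)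
    have hta : 0 ≤ t a := ht a (Finset.mem_insert_self a s)
    have hws : ∀ w ∈ s, 0 ≤ w := fun w hws' => hw w (Finset.mem_insert_of_mem hws')
    have hts : ∀ w ∈ s, 0 ≤ t w := fun w hws' => ht w (Finset.mem_insert_of_mem hws')
    have hsum0 : 0 ≤ ∑ w ∈ s, t w • w :=
      Finset.sum_nonneg fun w hw' => smul_nn (hts w hw') (hws w hw')
    rw [Finset.sum_insert has]
    have hP := P10 (smul_nn hta hwa) hsum0 hx
    have hIH : ((∑ w ∈ s, t w • w) - x)⁺ ∈ mJ Y :=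
      ih hws hts (fun w hw' => hterm w (Finset.mem_insert_of_mem hw'))
        (fun w hw' w' hw'' hne => hpair w (Finset.mem_insert_of_mem hw')
          w' (Finset.mem_insert_of_mem hw'') hne)
    have hcross : (t a • a) ⊓ (∑ w ∈ s, t w • w) ∈ mJ Y := by
      have h1 : (t a • a) ⊓ (∑ w ∈ s, t w • w) ≤ ∑ w ∈ s, (t a • a) ⊓ (t w • w) := by
        have h2 := sum_inf_le s (fun w => t w • w) (t a • a)
          (fun w hw' => smul_nn (hts w hw') (hws w hw')) (smul_nn hta hwa)
        calc (t a • a) ⊓ (∑ w ∈ s, t w • w) = (∑ w ∈ s, t w • w) ⊓ (t a • a) := inf_comm _ _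
          _ ≤ ∑ w ∈ s, (t w • w) ⊓ (t a • a) := h2
          _ = ∑ w ∈ s, (t a • a) ⊓ (t w • w) := by
              refine Finset.sum_congr rfl fun w _ => inf_comm _ _
      have h3 : ∑ w ∈ s, (t a • a) ⊓ (t w • w) ∈ mJ Y := by
        refine Submodule.sum_mem _ fun w hw' => ?_
        have hne : a ≠ w := fun h => has (h ▸ hw')
        have h4 : (t a • a) ⊓ (t w • w) ≤ (max (t a) (t w)) • (a ⊓ w) :=
          scaledInf hta (hts w hw') hwa (hws w hw')
        have h5 : (max (t a) (t w)) • (a ⊓ w) ∈ mJ Y :=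
          (mJ Y).smul_mem _ (hpair a (Finset.mem_insert_self a s) w
            (Finset.mem_insert_of_mem hw') hne)
        exact mJ_solid' Y (inf_nn (smul_nn hta hwa) (smul_nn (hts w hw') (hws w hw'))) h4 h5
      exact mJ_solid' Y (inf_nn (smul_nn hta hwa) hsum0) h1 h3
    have hsumJ : (t a • a - x)⁺ + ((∑ w ∈ s, t w • w) - x)⁺
        + ((t a • a) ⊓ (∑ w ∈ s, t w • w)) ∈ mJ Y :=
      Submodule.add_mem _ (Submodule.add_mem _
        (hterm a (Finset.mem_insert_self a s)) hIH) hcross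
    exact mJ_solid' Y (posPart_nonneg _) hP hsumJ

section DimC

lemma pi_posPart_apply {ι : Type*} (c : ι → ℝ) (i : ι) : (c⁺) i = (c i)⁺ := rfl

lemma dimC : ∀ (N : ℕ) {ι : Type*} [Fintype ι] [DecidableEq ι] (s : Finset ι)
    (R : Submodule ℝ (ι → ℝ)),
    s.card ≤ N →
    (∀ c ∈ R, (c⁺ : ι → ℝ) ∈ R) →
    (∀ c ∈ R, ∀ i, i ∉ s → c i = 0) →
    (∀ c ∈ R, ∀ i : ι, (∀ j, j ≠ i → c j = 0) → c = 0) →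
    2 * Module.finrank ℝ R ≤ s.card := by
  intro N
  induction N with
  | zero =>
    intro ι _ _ s R hcard hpos hsupp hsing
    have hs : s = ∅ := Finset.card_eq_zero.1 (Nat.le_zero.1 hcard)
    have hR : R = ⊥ := by
      rw [Submodule.eq_bot_iff]
      intro c hc
      funext i
      exact hsupp c hc i (by rw [hs]; exact Finset.notMem_empty i)
    rw [hR, finrank_bot]
    omega
  | succ N IH =>
    intro ι _ _ s R hcard hpos hsupp hsing
    classical
    by_cases hR : R = ⊥
    · rw [hR, finrank_bot]; omega
    obtain ⟨c0, hc0R, hc0⟩ := Submodule.ne_bot_iff R |>.1 hR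
    have hPos : ∃ c, c ∈ R ∧ 0 ≤ c ∧ c ≠ 0 := by
      by_cases h : (c0⁺ : ι → ℝ) = 0
      · refine ⟨((-c0)⁺ : ι → ℝ), hpos (-c0) (R.neg_mem hc0R), posPart_nonneg _, ?_⟩
        intro h2
        apply hc0
        have h3 : c0 ≤ 0 := posPart_eq_zero.1 h
        have h4 : -c0 ≤ 0 := posPart_eq_zero.1 h2
        have h5 : 0 ≤ c0 := by simpa using neg_nonpos.1 h4
        exact le_antisymm h3 h5
      · exact ⟨(c0⁺ : ι → ℝ), hpos c0 hc0R, posPart_nonneg _, h⟩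
    set suppF : (ι → ℝ) → Finset ι := fun c => Finset.univ.filter (fun i => c i ≠ 0) with hsuppF
    have mem_suppF : ∀ (c : ι → ℝ) (i : ι), i ∈ suppF c ↔ c i ≠ 0 := by
      intro c i; simp [hsuppF]
    set M := {m : ℕ | ∃ c, (c ∈ R ∧ 0 ≤ c ∧ c ≠ 0) ∧ (suppF c).card = m} with hM
    have hMne : M.Nonempty := by
      obtain ⟨c, h1, h2, h3⟩ := hPos
      exact ⟨(suppF c).card, c, ⟨h1, h2, h3⟩, rfl⟩
    obtain ⟨c, ⟨hcR, hc0le, hcne⟩, hccard⟩ := Nat.sInf_mem hMne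
    set S := suppF c with hS
    have hmin : ∀ d, d ∈ R → 0 ≤ d → d ≠ 0 → S.card ≤ (suppF d).card := by
      intro d h1 h2 h3
      rw [hS, hccard]
      exact Nat.sInf_le ⟨d, ⟨h1, h2, h3⟩, rfl⟩
    have hSsub : S ⊆ s := by
      intro i hi
      by_contra hns
      exact (mem_suppF c i).1 hi (hsupp c hcR i hns)
    have hSne : S.Nonempty := by
      by_contra hne
      rw [Finset.not_nonempty_iff_eq_empty] at hne
      apply hcne
      funext i
      have : i ∉ S := by rw [hne]; exact Finset.notMem_empty i
      by_contra hci
      exact this ((mem_suppF c i).2 hci)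
    have hcpos : ∀ i ∈ S, 0 < c i := by
      intro i hi
      have h1 : c i ≠ 0 := (mem_suppF c i).1 hi
      have h2 : (0:ℝ) ≤ c i := hc0le i
      exact lt_of_le_of_ne h2 (Ne.symm h1)
    have htwo : 2 ≤ S.card := by
      rcases Nat.lt_or_ge S.card 2 with h | h
      · exfalso
        interval_cases hSc : S.card
        · exact absurd (Finset.card_eq_zero.1 hSc) (Finset.nonempty_iff_ne_empty.1 hSne)
        · obtain ⟨i, hi⟩ := Finset.card_eq_one.1 hSc
          apply hcne
          apply hsing c hcR i
          intro j hj
          have : j ∉ S := by rw [hi]; simpa using hj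
          by_contra hcj
          exact this ((mem_suppF c j).2 hcj)
      · exact h
    have hinf : ∀ p ∈ R, ∀ q ∈ R, p ⊓ q ∈ R := by
      intro p hp q hq
      have h1 : p - ((p - q)⁺ : ι → ℝ) ∈ R := R.sub_mem hp (hpos _ (R.sub_mem hp hq))
      rwa [← inf_eq_sub_posPart_sub] at h1
    have hprop : ∀ d, d ∈ R → 0 ≤ d → ∃ t : ℝ, 0 ≤ t ∧ ∀ i ∈ S, d i = t * c i := by
      intro d hdR hd0
      have hSimne : (S.image (fun i => d i / c i)).Nonempty := hSne.image _
      set tmin := (S.image (fun i => d i / c i)).min' hSimne with htmin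
      obtain ⟨i0, hi0S, hi0⟩ := Finset.mem_image.1 (Finset.min'_mem _ hSimne)
      have htle : ∀ i ∈ S, tmin ≤ d i / c i := fun i hi =>
        Finset.min'_le _ _ (Finset.mem_image_of_mem _ hi)
      have ht0 : 0 ≤ tmin := by
        rw [htmin, ← hi0]
        exact div_nonneg (hd0 i0) (le_of_lt (hcpos i0 hi0S))
      set e := d - tmin • c with he
      have heR : e ∈ R := R.sub_mem hdR (R.smul_mem _ hcR)
      have he0 : 0 ≤ e := by
        intro i
        show (0:ℝ) ≤ d i - tmin * c i
        by_cases hiS : i ∈ S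
        · have h1 := htle i hiS
          rw [le_div_iff₀ (hcpos i hiS)] at h1
          linarith
        · have h1 : c i = 0 := by
            by_contra hci
            exact hiS ((mem_suppF c i).2 hci)
          rw [h1]
          simpa using hd0 i
      have hei0 : e i0 = 0 := by
        show d i0 - tmin * c i0 = 0
        rw [htmin, ← hi0, div_mul_cancel₀ _ (ne_of_gt (hcpos i0 hi0S)), sub_self]
      have heS : ∀ i ∈ S, e i = 0 := by
        by_contra hcon
        push_neg at hcon
        obtain ⟨i1, hi1S, hi1⟩ := hcon
        have hi1pos : 0 < e i1 := lt_of_le_of_ne (he0 i1) (Ne.symm hi1)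
        set r := e i1 / c i1 with hr
        have hrpos : 0 < r := div_pos hi1pos (hcpos i1 hi1S)
        set g := e ⊓ (r • c) with hg
        have hgR : g ∈ R := hinf _ heR _ (R.smul_mem _ hcR)
        have hg0 : 0 ≤ g := le_inf he0 (fun i => by
          show (0:ℝ) ≤ r * c i
          exact mul_nonneg (le_of_lt hrpos) (hc0le i))
        have hgi1 : g i1 = e i1 := by
          show min (e i1) (r * c i1) = e i1
          rw [hr, div_mul_cancel₀ _ (ne_of_gt (hcpos i1 hi1S)), min_self]
        have hgne : g ≠ 0 := by
          intro hg0'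
          have : g i1 = 0 := by rw [hg0']; rfl
          rw [hgi1] at this
          exact hi1 this
        have hsg : suppF g ⊆ S.erase i0 := by
          intro i hi
          have hgi : g i ≠ 0 := (mem_suppF g i).1 hi
          rw [Finset.mem_erase]
          constructor
          · intro hieq
            apply hgi
            show min (e i) (r * c i) = 0
            rw [hieq, hei0]
            exact min_eq_left (mul_nonneg (le_of_lt hrpos) (hc0le i0))
          · by_contra hiS
            have h1 : c i = 0 := by
              by_contra hci
              exact hiS ((mem_suppF c i).2 hci)
            apply hgi
            show min (e i) (r * c i) = 0
            rw [h1, mul_zero]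
            exact min_eq_right (he0 i)
        have h1 := hmin g hgR hg0 hgne
        have h2 : (suppF g).card < S.card :=
          lt_of_le_of_lt (Finset.card_le_card hsg) (Finset.card_erase_lt_of_mem hi0S)
        omega
      refine ⟨tmin, ht0, fun i hi => ?_⟩
      have h1 := heS i hi
      have h2 : d i - tmin * c i = 0 := h1
      linarith
    have hpropG : ∀ d, d ∈ R → ∃ t : ℝ, ∀ i ∈ S, d i = t * c i := by
      intro d hdR
      obtain ⟨t1, _, h1⟩ := hprop (d⁺ : ι → ℝ) (hpos d hdR) (posPart_nonneg _)
      obtain ⟨t2, _, h2⟩ := hprop ((-d)⁺ : ι → ℝ) (hpos (-d) (R.neg_mem hdR)) (posPart_nonneg _)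
      refine ⟨t1 - t2, fun i hi => ?_⟩
      have h3 : d i = (d i)⁺ - (-(d i))⁺ := by
        rw [← negP_eq]
        exact (posPart_sub_negPart (d i)).symm
      have h4 : ((d⁺ : ι → ℝ)) i = (d i)⁺ := rfl
      have h5 : (((-d)⁺ : ι → ℝ)) i = (-(d i))⁺ := rfl
      rw [h3, ← h4, ← h5, h1 i hi, h2 i hi]
      ring
    obtain ⟨iS, hiS⟩ := hSne
    set π := (LinearMap.proj iS : (ι → ℝ) →ₗ[ℝ] ℝ).comp R.subtype with hπ
    set R0 := Submodule.map R.subtype (LinearMap.ker π) with hR0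
    have hmemR0 : ∀ d : ι → ℝ, d ∈ R0 ↔ d ∈ R ∧ d iS = 0 := by
      intro d
      constructor
      · rintro ⟨x, hx, rfl⟩
        exact ⟨x.2, hx⟩
      · rintro ⟨h1, h2⟩
        exact ⟨⟨d, h1⟩, h2, rfl⟩
    have hzeroS : ∀ d ∈ R0, ∀ i ∈ S, d i = 0 := by
      intro d hd i hi
      obtain ⟨h1, h2⟩ := (hmemR0 d).1 hd
      obtain ⟨t, ht⟩ := hpropG d h1
      have h3 : t * c iS = 0 := by rw [← ht iS hiS]; exact h2
      have h4 : t = 0 := by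
        rcases mul_eq_zero.1 h3 with h | h
        · exact h
        · exact absurd h (ne_of_gt (hcpos iS hiS))
      rw [ht i hi, h4, zero_mul]
    have hfr1 : Module.finrank ℝ R ≤ Module.finrank ℝ R0 + 1 := by
      have h1 := LinearMap.finrank_range_add_finrank_ker π
      have h2 : Module.finrank ℝ (LinearMap.range π) ≤ 1 := by
        have := Submodule.finrank_le (LinearMap.range π)
        rwa [Module.finrank_self] at this
      have h3 : Module.finrank ℝ R0 = Module.finrank ℝ (LinearMap.ker π) :=
        (Submodule.equivMapOfInjective R.subtype R.injective_subtype
          (LinearMap.ker π)).finrank_eq.symm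
      omega
    have hIH : 2 * Module.finrank ℝ R0 ≤ (s \ S).card := by
      refine IH (s \ S) R0 ?_ ?_ ?_ ?_
      · have h1 : (s \ S).card = s.card - S.card := Finset.card_sdiff_of_subset hSsub
        omega
      · intro d hd
        obtain ⟨h1, h2⟩ := (hmemR0 d).1 hd
        refine (hmemR0 _).2 ⟨hpos d h1, ?_⟩
        show (d iS)⁺ = 0
        rw [h2]
        exact posPart_eq_zero.2 le_rfl
      · intro d hd i hi
        rw [Finset.mem_sdiff] at hi
        push_neg at hi
        by_cases his : i ∈ s
        · exact hzeroS d hd i (hi his)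
        · exact hsupp d ((hmemR0 d).1 hd).1 i his
      · intro d hd i hsing'
        exact hsing d ((hmemR0 d).1 hd).1 i hsing'
    have hcards : (s \ S).card = s.card - S.card := Finset.card_sdiff_of_subset hSsub
    have hSles : S.card ≤ s.card := Finset.card_le_card hSsub
    omega

end DimC

/-- finite linear combination as a linear map. -/
def mkLC {M : Type*} [AddCommGroup M] [Module ℝ M] {k : ℕ} (v : Fin k → M) :
    (Fin k → ℝ) →ₗ[ℝ] M where
  toFun c := ∑ j, c j • v j
  map_add' a b := by
    simp only [Pi.add_apply, add_smul]
    rw [Finset.sum_add_distrib]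
  map_smul' r a := by
    simp only [Pi.smul_apply, smul_eq_mul, RingHom.id_apply]
    rw [Finset.smul_sum]
    exact Finset.sum_congr rfl fun j _ => (mul_smul r (a j) (v j))

lemma famBound (hY : RUClosed (Y : Set X)) (hlat : IsVectorSublattice Y)
    {n : ℕ} (hfin : FiniteDimensional ℝ (X ⧸ Y)) (hn : Module.finrank ℝ (X ⧸ Y) = n)
    (F : Finset X) (hmem : ∀ w ∈ F, 0 ≤ w ∧ w ∉ mJ Y)
    (hpair : ∀ w ∈ F, ∀ w' ∈ F, w ≠ w' → w ⊓ w' ∈ mJ Y) :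
    F.card ≤ 2 * n := by
  classical
  set wf : Fin F.card → X := fun j => ((F.equivFin.symm j : ↥F) : X) with hwf
  have hwinj : Function.Injective wf := by
    intro a b hab
    exact F.equivFin.symm.injective (Subtype.ext hab)
  have hwmem : ∀ j, wf j ∈ F := fun j => (F.equivFin.symm j).2
  have hesc : ∀ j : Fin F.card, ∃ v : X, 0 ≤ v ∧ v ≤ wf j ∧ v ∉ Y := by
    intro j
    obtain ⟨hw0, hwJ⟩ := hmem _ (hwmem j)
    rw [mem_mJ] at hwJ
    push_neg at hwJ
    obtain ⟨y, hy1, hy2⟩ := hwJ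
    by_cases hyp : y⁺ ∈ Y
    · refine ⟨y⁻, negPart_nonneg _, ?_, ?_⟩
      · calc y⁻ ≤ |y| := negP_le_abs y
          _ ≤ |wf j| := hy1
          _ = wf j := abs_of_nonneg hw0
      · intro hyn
        apply hy2
        have h3 := Y.sub_mem hyp hyn
        rwa [posPart_sub_negPart] at h3
    · refine ⟨y⁺, posPart_nonneg _, ?_, hyp⟩
      calc y⁺ ≤ |y| := posP_le_abs y
        _ ≤ |wf j| := hy1
        _ = wf j := abs_of_nonneg hw0
  choose u hu0 hule hunotY using hesc
  have hupair : ∀ j j' : Fin F.card, j ≠ j' → u j ⊓ u j' ∈ mJ Y := by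
    intro j j' hne
    have h1 : u j ⊓ u j' ≤ wf j ⊓ wf j' := inf_le_inf (hule j) (hule j')
    have h2 : wf j ⊓ wf j' ∈ mJ Y :=
      hpair _ (hwmem j) _ (hwmem j') (fun h => hne (hwinj h))
    exact mJ_solid' Y (inf_nn (hu0 j) (hu0 j')) h1 h2
  set ψ : (Fin F.card → ℝ) →ₗ[ℝ] (X ⧸ Y) := mkLC (fun j => Y.mkQ (u j)) with hψ
  have hψeq : ∀ c : Fin F.card → ℝ, ψ c = Y.mkQ (∑ j, c j • u j) := by
    intro c
    show (∑ j, c j • Y.mkQ (u j)) = Y.mkQ (∑ j, c j • u j)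
    rw [map_sum]
    exact Finset.sum_congr rfl fun j _ => (map_smul Y.mkQ (c j) (u j)).symm
  have hne0 : ∀ j, Y.mkQ (u j) ≠ 0 := by
    intro j h
    rw [Submodule.mkQ_apply, Submodule.Quotient.mk_eq_zero] at h
    exact hunotY j h
  have hpos : ∀ c ∈ LinearMap.ker ψ, (c⁺ : Fin F.card → ℝ) ∈ LinearMap.ker ψ := by
    intro c hc
    have hc0 : ψ c = 0 := LinearMap.mem_ker.1 hc
    set U := ∑ j, (c j)⁺ • u j with hU
    set V := ∑ j, (c j)⁻ • u j with hV
    have hU0 : 0 ≤ U := Finset.sum_nonneg fun j _ => smul_nn (posPart_nonneg _) (hu0 j)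
    have hV0 : 0 ≤ V := Finset.sum_nonneg fun j _ => smul_nn (negPart_nonneg _) (hu0 j)
    have h1 : U - V = ∑ j, c j • u j := by
      rw [hU, hV, ← Finset.sum_sub_distrib]
      exact Finset.sum_congr rfl fun j _ => by rw [← sub_smul, posPart_sub_negPart]
    have h2 : U - V ∈ Y := by
      rw [← Submodule.Quotient.mk_eq_zero, ← Submodule.mkQ_apply]
      rw [h1, ← hψeq]
      exact hc0
    have hJinf : U ⊓ V ∈ mJ Y := by
      have step1 : U ⊓ V ≤ ∑ j, ((c j)⁺ • u j) ⊓ V := by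
        rw [hU]
        exact sum_inf_le _ _ _ (fun j _ => smul_nn (posPart_nonneg _) (hu0 j)) hV0
      have step2 : ∀ j : Fin F.card,
          ((c j)⁺ • u j) ⊓ V ≤ ∑ j', ((c j)⁺ • u j) ⊓ ((c j')⁻ • u j') := by
        intro j
        rw [inf_comm, hV]
        refine le_trans (sum_inf_le _ _ _
          (fun j' _ => smul_nn (negPart_nonneg _) (hu0 j'))
          (smul_nn (posPart_nonneg _) (hu0 j))) ?_
        exact le_of_eq (Finset.sum_congr rfl fun j' _ => inf_comm _ _)
      have hmemd : (∑ j, ∑ j', ((c j)⁺ • u j) ⊓ ((c j')⁻ • u j')) ∈ mJ Y := by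
        refine Submodule.sum_mem _ fun j _ => Submodule.sum_mem _ fun j' _ => ?_
        by_cases hjj : j = j'
        · subst hjj
          rcases le_or_gt (c j) 0 with hle | hlt
          · rw [posPart_eq_zero.2 hle, zero_smul]
            have : (0:X) ⊓ ((c j)⁻ • u j) = 0 :=
              inf_eq_left.2 (smul_nn (negPart_nonneg _) (hu0 j))
            rw [this]; exact (mJ Y).zero_mem
          · have hneg0 : (c j)⁻ = 0 := by
              rw [negP_eq]
              exact posPart_eq_zero.2 (by linarith)
            rw [hneg0, zero_smul]
            have : ((c j)⁺ • u j) ⊓ (0:X) = 0 :=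
              inf_eq_right.2 (smul_nn (posPart_nonneg _) (hu0 j))
            rw [this]; exact (mJ Y).zero_mem
        · have h3 := scaledInf (posPart_nonneg (c j)) (negPart_nonneg (c j'))
            (hu0 j) (hu0 j')
          exact mJ_solid' Y
            (inf_nn (smul_nn (posPart_nonneg _) (hu0 j)) (smul_nn (negPart_nonneg _) (hu0 j')))
            h3 ((mJ Y).smul_mem _ (hupair j j' hjj))
      have hle2 : U ⊓ V ≤ ∑ j, ∑ j', ((c j)⁺ • u j) ⊓ ((c j')⁻ • u j') :=
        le_trans step1 (Finset.sum_le_sum fun j _ => step2 j)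
      exact mJ_solid' Y (inf_nn hU0 hV0) hle2 hmemd
    have h3 : (U - V)⁺ = U - U ⊓ V := by
      have h4 := sub_posP_inf U V
      have h5 : U - (U - (U - V)⁺) = U - (U ⊓ V) := by rw [h4]
      rw [sub_sub_cancel] at h5
      exact h5
    have hUY : U ∈ Y := by
      have h6 : (U - V)⁺ ∈ Y := by
        have := hlat (U - V) h2 0 Y.zero_mem
        rwa [← posPart_def] at this
      have h7 : U = (U - V)⁺ + U ⊓ V := by
        rw [h3]; abel
      rw [h7]
      exact Y.add_mem h6 (mJ_le Y hJinf)
    rw [LinearMap.mem_ker]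
    have h8 : ψ (c⁺ : Fin F.card → ℝ) = Y.mkQ U := by
      rw [hψeq]
      congr 1
    rw [h8, Submodule.mkQ_apply, Submodule.Quotient.mk_eq_zero]
    exact hUY
  have hsing : ∀ c ∈ LinearMap.ker ψ, ∀ i : Fin F.card,
      (∀ j, j ≠ i → c j = 0) → c = 0 := by
    intro c hc i hz
    have hc0 : ψ c = 0 := LinearMap.mem_ker.1 hc
    have h1 : ψ c = c i • Y.mkQ (u i) := by
      show (∑ j, c j • Y.mkQ (u j)) = c i • Y.mkQ (u i)
      refine Finset.sum_eq_single i (fun j _ hji => by rw [hz j hji, zero_smul])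
        (fun h => absurd (Finset.mem_univ i) h)
    rw [h1] at hc0
    rcases smul_eq_zero.1 hc0 with h | h
    · funext j
      by_cases hji : j = i
      · rw [hji]; exact h
      · exact hz j hji
    · exact absurd h (hne0 i)
  have hdim := dimC F.card (Finset.univ : Finset (Fin F.card)) (LinearMap.ker ψ)
    (by simp) hpos (fun c _ i hi => absurd (Finset.mem_univ i) hi) hsing
  simp only [Finset.card_univ, Fintype.card_fin] at hdim
  have hrn := LinearMap.finrank_range_add_finrank_ker ψ
  have hrange : Module.finrank ℝ (LinearMap.range ψ) ≤ n := by
    have := Submodule.finrank_le (LinearMap.range ψ)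
    rwa [hn] at this
  have hdom : Module.finrank ℝ (Fin F.card → ℝ) = F.card := by
    rw [Module.finrank_pi]
    exact Fintype.card_fin _
  omega

lemma spanJ (hY : RUClosed (Y : Set X)) (hlat : IsVectorSublattice Y)
    {n : ℕ} (hfin : FiniteDimensional ℝ (X ⧸ Y)) (hn : Module.finrank ℝ (X ⧸ Y) = n) :
    ∃ E : Finset X, E.card ≤ 2 * n ∧
      ∀ x : X, 0 ≤ x → ∃ t : X → ℝ, x - ∑ w ∈ E, t w • w ∈ mJ Y := by
  classical
  set Pfam : ℕ → Prop := fun k => ∃ F : Finset X, F.card = k ∧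
    (∀ w ∈ F, 0 ≤ w ∧ w ∉ mJ Y) ∧
    (∀ w ∈ F, ∀ w' ∈ F, w ≠ w' → w ⊓ w' ∈ mJ Y) with hPfam
  have hbound : ∀ k, Pfam k → k ≤ 2 * n := by
    rintro k ⟨F, rfl, h1, h2⟩
    exact famBound Y hY hlat hfin hn F h1 h2
  have hP0 : Pfam 0 := ⟨∅, rfl, by simp, by simp⟩
  set K := Nat.findGreatest Pfam (2 * n) with hK
  have hPK : Pfam K := Nat.findGreatest_spec (Nat.zero_le _) hP0
  have hKle : K ≤ 2 * n := hbound K hPK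
  have hnot : ¬ Pfam (K + 1) := by
    intro hP
    have h1 : K + 1 ≤ 2 * n := hbound _ hP
    exact Nat.findGreatest_is_greatest (by omega) h1 hP
  obtain ⟨E, hEcard, hEmem, hEpair⟩ := hPK
  refine ⟨E, by omega, ?_⟩
  intro x hx
  have hget : ∀ w : X, w ∈ E → ∃ t : ℝ, 0 ≤ t ∧ (t • w - x)⁺ ∈ mJ Y ∧
      ∀ s : ℝ, 0 < s → ((t + s) • w - x)⁺ ∉ mJ Y := by
    intro w hw
    exact getT Y hY hx (hEmem w hw).1 (hEmem w hw).2
  choose! t ht0 htJ htmax using hget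
  refine ⟨t, ?_⟩
  set Ssum := ∑ w ∈ E, t w • w with hSsum
  set z := (x - Ssum)⁺ with hz
  set m₀ := (Ssum - x)⁺ with hm
  have hm₀J : m₀ ∈ mJ Y :=
    sumP Y hx (fun w hw => (hEmem w hw).1) ht0 htJ
      (fun w hw w' hw' hne => hEpair w hw w' hw' hne)
  have hzm : z - m₀ = x - Ssum := by
    rw [hz, hm]
    have h := posPart_sub_negPart (x - Ssum)
    rw [negP_eq, neg_sub] at h
    exact h
  have hz0 : 0 ≤ z := posPart_nonneg _
  have hzw : ∀ w ∈ E, z ⊓ w ∈ mJ Y := by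
    intro w hw
    obtain ⟨hw0, hwJ⟩ := hEmem w hw
    have htot : ∀ r : ℝ, ((z ⊓ w) - r • w)⁺ ∈ mJ Y ∨ ((z ⊓ w) - r • w)⁻ ∈ mJ Y := by
      intro r
      by_contra hcon
      push_neg at hcon
      obtain ⟨h1, h2⟩ := hcon
      set p := (z ⊓ w) - r • w with hp
      have hpw' : ∀ w' ∈ E, w' ≠ w → |p| ⊓ w' ∈ mJ Y := by
        intro w' hw' hne
        have hw'0 := (hEmem w' hw').1
        have habs : |p| ≤ (z ⊓ w) + |r| • w := by
          have e1 : |z ⊓ w| = z ⊓ w := abs_of_nonneg (inf_nn hz0 hw0)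
          have e2 : |r • w| = |r| • w := by rw [abs_smul', abs_of_nonneg hw0]
          calc |p| = |(z ⊓ w) + (-(r • w))| := by rw [hp, sub_eq_add_neg]
            _ ≤ |z ⊓ w| + |(-(r • w))| := abs_add_le _ _
            _ = (z ⊓ w) + |r| • w := by rw [abs_neg, e1, e2]
        have h3 : |p| ⊓ w' ≤ ((z ⊓ w) ⊓ w') + ((|r| • w) ⊓ w') := by
          refine le_trans (inf_le_inf_right w' habs) ?_
          exact add_inf_le (smul_nn (abs_nonneg r) hw0) (inf_nn hz0 hw0) hw'0
        have hww' : w ⊓ w' ∈ mJ Y := hEpair w hw w' hw' (fun h => hne h.symm)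
        have h4 : (z ⊓ w) ⊓ w' ∈ mJ Y := by
          refine mJ_solid' Y (inf_nn (inf_nn hz0 hw0) hw'0) ?_ hww'
          exact inf_le_inf_right w' inf_le_right
        have h5 : (|r| • w) ⊓ w' ∈ mJ Y := by
          have h6 := scaledInf (abs_nonneg r) zero_le_one hw0 hw'0
          rw [one_smul] at h6
          exact mJ_solid' Y (inf_nn (smul_nn (abs_nonneg r) hw0) hw'0) h6
            ((mJ Y).smul_mem _ hww')
        exact mJ_solid' Y (inf_nn (abs_nonneg p) hw'0) h3 ((mJ Y).add_mem h4 h5)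
      have hppne : p⁺ ≠ p⁻ := by
        intro he
        apply h1
        have h3 := posPart_inf_negPart_eq_zero p
        rw [← he, inf_idem] at h3
        rw [h3]; exact (mJ Y).zero_mem
      have hpne : ∀ w' ∈ E.erase w, p⁺ ≠ w' ∧ p⁻ ≠ w' := by
        intro w' hw'
        obtain ⟨hne, hw'E⟩ := Finset.mem_erase.1 hw'
        have hw'J := (hEmem w' hw'E).2
        constructor
        · intro he
          have h3 : p⁺ ⊓ w' ≤ |p| ⊓ w' := inf_le_inf_right w' (posP_le_abs p)
          have h5 : p⁺ ⊓ w' ∈ mJ Y := mJ_solid' Y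
            (inf_nn (posPart_nonneg p) (hEmem w' hw'E).1) h3 (hpw' w' hw'E hne)
          rw [he, inf_idem] at h5
          exact hw'J h5
        · intro he
          have h3 : p⁻ ⊓ w' ≤ |p| ⊓ w' := inf_le_inf_right w' (negP_le_abs p)
          have h5 : p⁻ ⊓ w' ∈ mJ Y := mJ_solid' Y
            (inf_nn (negPart_nonneg p) (hEmem w' hw'E).1) h3 (hpw' w' hw'E hne)
          rw [he, inf_idem] at h5
          exact hw'J h5
      apply hnot
      refine ⟨insert p⁺ (insert p⁻ (E.erase w)), ?_, ?_, ?_⟩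
      · have h3 : p⁻ ∉ E.erase w := fun h => (hpne p⁻ h).2 rfl
        have h4 : p⁺ ∉ insert p⁻ (E.erase w) := by
          rw [Finset.mem_insert]
          rintro (he | hmem)
          · exact hppne he
          · exact (hpne p⁺ hmem).1 rfl
        have h5 : 0 < E.card := Finset.card_pos.2 ⟨w, hw⟩
        rw [Finset.card_insert_of_notMem h4, Finset.card_insert_of_notMem h3,
          Finset.card_erase_of_mem hw]
        omega
      · intro v hv
        rw [Finset.mem_insert, Finset.mem_insert] at hv
        rcases hv with rfl | rfl | hv
        · exact ⟨posPart_nonneg p, h1⟩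
        · exact ⟨negPart_nonneg p, h2⟩
        · exact hEmem v (Finset.mem_of_mem_erase hv)
      · intro v hv v' hv' hvne
        rw [Finset.mem_insert, Finset.mem_insert] at hv hv'
        have hsolidcase : ∀ q : X, 0 ≤ q → q ≤ |p| → ∀ v'' ∈ E.erase w, q ⊓ v'' ∈ mJ Y := by
          intro q hq0 hqle v'' hv''
          obtain ⟨hne'', hv''E⟩ := Finset.mem_erase.1 hv''
          refine mJ_solid' Y (inf_nn hq0 (hEmem v'' hv''E).1) ?_ (hpw' v'' hv''E hne'')
          exact inf_le_inf_right v'' hqle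
        rcases hv with rfl | rfl | hv <;> rcases hv' with rfl | rfl | hv'
        · exact absurd rfl hvne
        · rw [posPart_inf_negPart_eq_zero]; exact (mJ Y).zero_mem
        · exact hsolidcase _ (posPart_nonneg p) (posP_le_abs p) v' hv'
        · rw [inf_comm, posPart_inf_negPart_eq_zero]; exact (mJ Y).zero_mem
        · exact absurd rfl hvne
        · exact hsolidcase _ (negPart_nonneg p) (negP_le_abs p) v' hv'
        · rw [inf_comm]; exact hsolidcase _ (posPart_nonneg p) (posP_le_abs p) v hv
        · rw [inf_comm]; exact hsolidcase _ (negPart_nonneg p) (negP_le_abs p) v hv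
        · exact hEpair v (Finset.mem_of_mem_erase hv) v' (Finset.mem_of_mem_erase hv') hvne
    obtain ⟨s, hs0, hsJ⟩ := F2 Y hY hw0 (inf_nn hz0 hw0) hwJ htot
    rcases eq_or_lt_of_le hs0 with hseq | hslt
    · rw [← hseq, zero_smul, sub_zero] at hsJ
      exact hsJ
    · exfalso
      set j0 := (z ⊓ w) - s • w with hj0
      have e1 : x = z - m₀ + Ssum := by rw [hzm, sub_add_cancel]
      have e2 : s • w + j0 = z ⊓ w := by rw [hj0, add_sub_cancel]
      have e3 : t w • w ≤ Ssum := by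
        rw [hSsum]
        exact Finset.single_le_sum
          (fun w' hw' => smul_nn (ht0 w' hw') (hEmem w' hw').1) hw
      have hxge : (t w + s) • w - x ≤ m₀ - j0 := by
        have hA : t w • w - Ssum ≤ 0 := sub_nonpos.2 e3
        have hB : s • w - z ≤ -j0 := by
          have h3 : s • w ≤ z - j0 := by
            have h4 : s • w + j0 ≤ z := by rw [e2]; exact inf_le_left
            exact le_sub_iff_add_le.2 h4
          calc s • w - z ≤ (z - j0) - z := sub_le_sub_right h3 z
            _ = -j0 := by abel
        calc (t w + s) • w - x
            = (t w • w - Ssum) + (s • w - z) + m₀ := by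
              rw [e1, add_smul]; abel
          _ ≤ 0 + (-j0) + m₀ := by
              exact add_le_add (add_le_add hA hB) le_rfl
          _ = m₀ - j0 := by abel
      have hfin2 : ((t w + s) • w - x)⁺ ∈ mJ Y := by
        have h3 : ((t w + s) • w - x)⁺ ≤ (m₀ - j0)⁺ := posPart_mono hxge
        have h4 : (m₀ - j0)⁺ ≤ |m₀| + |j0| := by
          calc (m₀ - j0)⁺ ≤ |m₀ - j0| := posP_le_abs _
            _ = |m₀ + (-j0)| := by rw [sub_eq_add_neg]
            _ ≤ |m₀| + |(-j0)| := abs_add_le _ _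
            _ = |m₀| + |j0| := by rw [abs_neg]
        have h5 : |m₀| + |j0| ∈ mJ Y :=
          (mJ Y).add_mem (mJ_abs_mem Y hm₀J) (mJ_abs_mem Y hsJ)
        exact mJ_solid' Y (posPart_nonneg _) (le_trans h3 h4) h5
      exact htmax w hw s hslt hfin2
  have hzJ : z ∈ mJ Y := by
    by_contra hzn
    have hzE : z ∉ E := by
      intro hzE
      have h3 := hzw z hzE
      rw [inf_idem] at h3
      exact hzn h3
    apply hnot
    refine ⟨insert z E, ?_, ?_, ?_⟩
    · rw [Finset.card_insert_of_notMem hzE, hEcard]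
    · intro v hv
      rcases Finset.mem_insert.1 hv with rfl | hv
      · exact ⟨hz0, hzn⟩
      · exact hEmem v hv
    · intro v hv v' hv' hne
      rcases Finset.mem_insert.1 hv with rfl | hv <;>
        rcases Finset.mem_insert.1 hv' with rfl | hv'
      · exact absurd rfl hne
      · exact hzw v' hv'
      · rw [inf_comm]; exact hzw v hv
      · exact hEpair v hv v' hv' hne
  rw [← hzm]
  exact (mJ Y).sub_mem hzJ hm₀J

end VL18

theorem stmt18 {X : Type*} [AddCommGroup X] [Lattice X]
    [CovariantClass X X (· + ·) (· ≤ ·)] [Module ℝ X] [PosSMulMono ℝ X] (hArch : ArchimedeanVL X) (Y : Submodule ℝ X)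
    (hY : RUClosed (Y : Set X)) (hlat : IsVectorSublattice Y)
    (n : ℕ) (hfin : FiniteDimensional ℝ (X ⧸ Y)) (hn : Module.finrank ℝ (X ⧸ Y) = n) :
    ∃ J : Submodule ℝ X, J ≤ Y ∧ IsOrderIdeal J ∧ RUClosed (J : Set X) ∧
      FiniteDimensional ℝ (X ⧸ J) ∧ Module.finrank ℝ (X ⧸ J) ≤ 2 * n := by
  classical
  obtain ⟨E, hEcard, hspan⟩ := VL18.spanJ Y hY hlat hfin hn
  set J := VL18.mJ Y with hJ
  set v : Fin E.card → X := fun j => ((E.equivFin.symm j : ↥E) : X) with hv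
  set φ : (Fin E.card → ℝ) →ₗ[ℝ] (X ⧸ J) := VL18.mkLC (fun j => J.mkQ (v j)) with hφ
  have hφeq : ∀ c : Fin E.card → ℝ, φ c = J.mkQ (∑ j, c j • v j) := by
    intro c
    show (∑ j, c j • J.mkQ (v j)) = J.mkQ (∑ j, c j • v j)
    rw [map_sum]
    exact Finset.sum_congr rfl fun j _ => (map_smul J.mkQ (c j) (v j)).symm
  have hsum : ∀ x : X, 0 ≤ x → ∃ c : Fin E.card → ℝ, J.mkQ x = φ c := by
    intro x hx
    obtain ⟨t, ht⟩ := hspan x hx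
    refine ⟨fun j => t (v j), ?_⟩
    rw [hφeq]
    have h1 : (∑ j, t (v j) • v j) = ∑ w ∈ E, t w • w := by
      have h2 := Fintype.sum_equiv E.equivFin.symm
        (fun j => t (v j) • v j) (fun w => t (w : X) • (w : X)) (fun j => rfl)
      rw [h2]
      exact Finset.sum_coe_sort E (fun w => t w • w)
    rw [h1]
    rw [Submodule.mkQ_apply, Submodule.mkQ_apply]
    exact (Submodule.Quotient.eq J).2 ht
  have hsurj : Function.Surjective φ := by
    intro q
    obtain ⟨x, rfl⟩ := J.mkQ_surjective q
    obtain ⟨c1, h1⟩ := hsum (x⁺) (posPart_nonneg x)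
    obtain ⟨c2, h2⟩ := hsum (x⁻) (negPart_nonneg x)
    refine ⟨c1 - c2, ?_⟩
    rw [map_sub, ← h1, ← h2, ← map_sub, posPart_sub_negPart]
  haveI hfinJ : FiniteDimensional ℝ (X ⧸ J) := Module.Finite.of_surjective φ hsurj
  refine ⟨J, VL18.mJ_le Y, VL18.mJ_ideal Y, VL18.mJ_RUClosed Y hY, hfinJ, ?_⟩
  have h1 := LinearMap.finrank_range_add_finrank_ker φ
  have h2 : LinearMap.range φ = ⊤ := LinearMap.range_eq_top.2 hsurj
  have h3 : Module.finrank ℝ (X ⧸ J) = Module.finrank ℝ (LinearMap.range φ) := by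
    rw [h2]
    exact (finrank_top ℝ _).symm
  have h4 : Module.finrank ℝ (Fin E.card → ℝ) = E.card := by
    rw [Module.finrank_pi]
    exact Fintype.card_fin _
  omega
end

section
/- If X is a uniformly complete Archimedean vector lattice, then every order ideal of finite codimension in X is uniformly closed. -/
/-- Uniform completeness: every relatively uniformly Cauchy sequence (with regulator `e`)
converges relatively uniformly (with regulator `e`). -/
def UniformlyCompleteVL (X : Type*) [AddCommGroup X] [Lattice X] [Module ℝ X] : Prop :=
  ∀ (a : ℕ → X) (e : X), 0 ≤ e →
    (∀ ε : ℝ, 0 < ε → ∃ N, ∀ m ≥ N, ∀ n ≥ N, |a m - a n| ≤ ε • e) →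
    ∃ x : X, ∀ ε : ℝ, 0 < ε → ∃ N, ∀ n ≥ N, |a n - x| ≤ ε • e

section Aux

variable {X : Type*} [AddCommGroup X] [Lattice X]
    [CovariantClass X X (· + ·) (· ≤ ·)] [Module ℝ X] [PosSMulMono ℝ X]

private lemma smul_le_smul_right_of_nonneg' {l m : ℝ} (h : l ≤ m) {e : X} (he : 0 ≤ e) :
    l • e ≤ m • e := by
  have h1 : 0 ≤ (m - l) • e := smul_nonneg (by linarith) he
  calc l • e = l • e + 0 := (add_zero _).symm
    _ ≤ l • e + (m - l) • e := add_le_add_right h1 _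
    _ = m • e := by rw [← add_smul]; congr 1; ring

private lemma smul_sup' {c : ℝ} (hc : 0 < c) (a b : X) : c • (a ⊔ b) = c • a ⊔ c • b := by
  apply le_antisymm
  · have h : a ⊔ b ≤ c⁻¹ • (c • a ⊔ c • b) := by
      apply sup_le
      · have h1 := smul_le_smul_of_nonneg_left (le_sup_left : c • a ≤ c • a ⊔ c • b)
          (inv_nonneg.2 hc.le)
        rwa [inv_smul_smul₀ hc.ne'] at h1
      · have h1 := smul_le_smul_of_nonneg_left (le_sup_right : c • b ≤ c • a ⊔ c • b)
          (inv_nonneg.2 hc.le)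
        rwa [inv_smul_smul₀ hc.ne'] at h1
    have h2 := smul_le_smul_of_nonneg_left h hc.le
    rwa [smul_inv_smul₀ hc.ne'] at h2
  · exact sup_le (smul_le_smul_of_nonneg_left le_sup_left hc.le)
      (smul_le_smul_of_nonneg_left le_sup_right hc.le)

private lemma abs_smul'' (c : ℝ) (a : X) : |c • a| = |c| • |a| := by
  have key : ∀ d : ℝ, 0 < d → ∀ b : X, |d • b| = d • |b| := by
    intro d hd b
    rw [abs, abs, smul_sup' hd, ← smul_neg]
  rcases lt_trichotomy c 0 with h | h | h
  · have h1 : c • a = -((-c) • a) := by rw [neg_smul, neg_neg]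
    rw [h1, abs_neg, key (-c) (by linarith) a, abs_of_neg h]
  · subst h; simp
  · rw [key c h a, abs_of_pos h]

private lemma nonpos_of_forall_le_smul (hArch : ArchimedeanVL X) {y e : X} (he : 0 ≤ e)
    (h : ∀ δ : ℝ, 0 < δ → y ≤ δ • e) : y ≤ 0 := by
  have key : y ⊔ 0 = 0 := by
    apply hArch _ e le_sup_right
    intro n
    have hδ : (0:ℝ) < 1 / (n + 1) := by positivity
    have h1 : y ⊔ 0 ≤ (1 / (n + 1) : ℝ) • e :=
      sup_le (h _ hδ) (smul_nonneg hδ.le he)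
    have h2 := smul_le_smul_of_nonneg_left h1 (Nat.cast_nonneg (α := ℝ) n)
    rw [smul_smul] at h2
    have h3 : ((n : ℝ) * (1 / (n + 1))) • e ≤ (1 : ℝ) • e := by
      apply smul_le_smul_right_of_nonneg' _ he
      rw [mul_one_div]
      apply div_le_one_of_le₀
      · linarith
      · positivity
    have h4 := h2.trans h3
    rw [one_smul] at h4
    rw [← Nat.cast_smul_eq_nsmul ℝ n (y ⊔ 0)]
    exact h4
  calc y ≤ y ⊔ 0 := le_sup_left
    _ = 0 := key

private lemma sum_nonneg'' {s : Finset ℕ} {f : ℕ → X} (h : ∀ i ∈ s, 0 ≤ f i) :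
    0 ≤ ∑ i ∈ s, f i :=
  Finset.sum_induction f (fun z => 0 ≤ z) (fun _ _ ha hb => add_nonneg ha hb) le_rfl h

private lemma sum_le_sum'' {s : Finset ℕ} {f g : ℕ → X} (h : ∀ i ∈ s, f i ≤ g i) :
    ∑ i ∈ s, f i ≤ ∑ i ∈ s, g i := by
  rw [← sub_nonneg, ← Finset.sum_sub_distrib]
  exact sum_nonneg'' (fun i hi => sub_nonneg.2 (h i hi))

private lemma key_lemma (hArch : ArchimedeanVL X) (hcomp : UniformlyCompleteVL X)
    (J : Submodule ℝ X) (hJ : IsOrderIdeal J) (hfin : FiniteDimensional ℝ (X ⧸ J)) (x : X) :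
    ∀ d : ℕ, ∀ e : X, 0 ≤ e → ∀ Q : Submodule ℝ X, IsOrderIdeal Q → J ≤ Q → e ∈ Q →
      Module.finrank ℝ (Q.map J.mkQ) ≤ d →
      (∀ ε : ℝ, 0 < ε → ∃ a ∈ J, |x - a| ≤ ε • e) → x ∈ J := by
  haveI := hfin
  intro d
  induction d using Nat.strong_induction_on with
  | _ d IH =>
  intro e he Q hQ hJQ heQ hrank hx
  by_cases hcase : ∃ a ∈ J, |e - a| ≤ (1/2 : ℝ) • e
  · -- In this case `e ∈ J`, hence `x ∈ J` by solidity.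
    obtain ⟨a, haJ, ha⟩ := hcase
    have h1 : e ≤ (1/2 : ℝ) • e + |a| := by
      calc e = (e - a) + a := by abel
        _ ≤ |e - a| + |a| := add_le_add (le_abs_self _) (le_abs_self _)
        _ ≤ (1/2 : ℝ) • e + |a| := add_le_add_left ha _
    have h2 : (1/2 : ℝ) • e ≤ |a| := by
      have h3 : e - (1/2 : ℝ) • e = (1/2 : ℝ) • e := by
        rw [show e - (1/2 : ℝ) • e = (1 - 1/2 : ℝ) • e by rw [sub_smul, one_smul]]
        norm_num
      calc (1/2 : ℝ) • e = e - (1/2 : ℝ) • e := h3.symm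
        _ ≤ |a| := by
          rw [sub_le_iff_le_add]
          exact h1.trans (le_of_eq (add_comm _ _))
    have heJ : e ∈ J := by
      apply hJ e ((2:ℝ) • a) _ (J.smul_mem _ haJ)
      rw [abs_smul'', abs_of_nonneg he]
      calc e = (2 : ℝ) • ((1/2 : ℝ) • e) := by rw [smul_smul]; norm_num
        _ ≤ (2 : ℝ) • |a| := smul_le_smul_of_nonneg_left h2 (by norm_num)
        _ = |(2:ℝ)| • |a| := by norm_num
    obtain ⟨c, hcJ, hc⟩ := hx 1 one_pos
    have hxc : x - c ∈ J := by
      apply hJ (x - c) e _ heJ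
      rw [abs_of_nonneg he]
      simpa using hc
    have hx2 : x = (x - c) + c := by abel
    rw [hx2]
    exact J.add_mem hxc hcJ
  · push_neg at hcase
    -- choose approximants with |x - b k| ≤ (1/4)^k • e
    choose b hbJ hb using fun k : ℕ => hx ((1/4 : ℝ)^k) (by positivity)
    set t : ℕ → X := fun k => (2:ℝ)^k • |x - b k| with ht
    have htnn : ∀ k, 0 ≤ t k := fun k => smul_nonneg (by positivity) (abs_nonneg _)
    have htle : ∀ k, t k ≤ ((1/2:ℝ))^k • e := by
      intro k
      have h1 := smul_le_smul_of_nonneg_left (hb k) (show (0:ℝ) ≤ 2^k by positivity)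
      rw [smul_smul] at h1
      calc t k ≤ ((2:ℝ)^k * (1/4)^k) • e := h1
        _ = ((1/2:ℝ)^k) • e := by congr 1; rw [← mul_pow]; norm_num
    set S : ℕ → X := fun n => ∑ k ∈ Finset.range n, t k with hS
    have hSmono : ∀ {m n : ℕ}, m ≤ n → S m ≤ S n := by
      intro m n h
      rw [← sub_nonneg]
      have e1 : S n - S m = ∑ k ∈ Finset.Ico m n, t k :=
        (Finset.sum_Ico_eq_sub _ h).symm
      rw [e1]
      exact sum_nonneg'' (fun i _ => htnn i)
    have hSdiff : ∀ m n : ℕ, m ≤ n → S n - S m ≤ (2 * (1/2:ℝ)^m) • e := by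
      intro m n h
      have e1 : S n - S m = ∑ k ∈ Finset.Ico m n, t k :=
        (Finset.sum_Ico_eq_sub _ h).symm
      have e4 : (∑ k ∈ Finset.Ico m n, (1/2:ℝ)^k) ≤ 2 * (1/2:ℝ)^m := by
        rw [Finset.sum_Ico_eq_sum_range]
        have e5 : ∀ i ∈ Finset.range (n - m), (1/2:ℝ)^(m + i) = (1/2:ℝ)^m * (1/2:ℝ)^i := by
          intro i _; rw [pow_add]
        rw [Finset.sum_congr rfl e5, ← Finset.mul_sum]
        calc (1/2:ℝ)^m * ∑ i ∈ Finset.range (n - m), (1/2:ℝ)^i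
            ≤ (1/2:ℝ)^m * 2 :=
              mul_le_mul_of_nonneg_left (sum_geometric_two_le _) (by positivity)
          _ = 2 * (1/2:ℝ)^m := by ring
      rw [e1]
      calc ∑ k ∈ Finset.Ico m n, t k
          ≤ ∑ k ∈ Finset.Ico m n, ((1/2:ℝ)^k) • e := sum_le_sum'' (fun k _ => htle k)
        _ = (∑ k ∈ Finset.Ico m n, (1/2:ℝ)^k) • e := by rw [Finset.sum_smul]
        _ ≤ (2 * (1/2:ℝ)^m) • e := smul_le_smul_right_of_nonneg' e4 he
    have hCauchy : ∀ ε : ℝ, 0 < ε → ∃ N, ∀ m ≥ N, ∀ n ≥ N, |S m - S n| ≤ ε • e := by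
      intro ε hε
      obtain ⟨N, hN⟩ : ∃ N : ℕ, ((1/2:ℝ))^N < ε/2 :=
        exists_pow_lt_of_lt_one (by positivity) (by norm_num)
      refine ⟨N, ?_⟩
      have main : ∀ m n : ℕ, N ≤ n → n ≤ m → |S m - S n| ≤ ε • e := by
        intro m n hn hnm
        rw [abs_of_nonneg (sub_nonneg.2 (hSmono hnm))]
        refine (hSdiff n m hnm).trans (smul_le_smul_right_of_nonneg' ?_ he)
        have h5 : ((1/2:ℝ))^n ≤ (1/2:ℝ)^N :=
          pow_le_pow_of_le_one (by norm_num) (by norm_num) hn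
        linarith
      intro m hm n hn
      rcases le_total n m with hle | hle
      · exact main m n hn hle
      · rw [abs_sub_comm]; exact main n m hm hle
    obtain ⟨L, hL⟩ := hcomp S e he hCauchy
    have hSnL : ∀ n, S n ≤ L := by
      intro n
      have h6 : S n - L ≤ 0 := by
        apply nonpos_of_forall_le_smul hArch he
        intro δ hδ
        obtain ⟨N, hN⟩ := hL δ hδ
        have h7 := hN (max n N) (le_max_right _ _)
        have h8 : S (max n N) - L ≤ δ • e := (le_abs_self _).trans h7
        calc S n - L ≤ S (max n N) - L := sub_le_sub_right (hSmono (le_max_left _ _)) L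
          _ ≤ δ • e := h8
      exact sub_nonpos.1 h6
    have hS0 : S 0 = 0 := by simp [hS]
    have hLnn : 0 ≤ L := hS0 ▸ hSnL 0
    have htkL : ∀ k, t k ≤ L := by
      intro k
      refine le_trans ?_ (hSnL (k+1))
      have hsucc : S (k+1) = S k + t k := Finset.sum_range_succ t k
      rw [hsucc]
      calc t k = 0 + t k := (zero_add _).symm
        _ ≤ S k + t k := add_le_add_left (sum_nonneg'' (fun i _ => htnn i)) _
    have hxk : ∀ k, |x - b k| ≤ ((1/2:ℝ)^k) • L := by
      intro k
      have h10 := smul_le_smul_of_nonneg_left (htkL k) (show (0:ℝ) ≤ (1/2)^k by positivity)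
      calc |x - b k| = ((1/2:ℝ)^k * 2^k) • |x - b k| := by
            rw [show ((1/2:ℝ)^k * 2^k) = 1 by rw [← mul_pow]; norm_num, one_smul]
        _ = (1/2:ℝ)^k • t k := by rw [ht, smul_smul]
        _ ≤ (1/2:ℝ)^k • L := h10
    -- the ideal of elements approximable from `J` with regulator `e`
    set Ne : Submodule ℝ X :=
      { carrier := {z | ∀ ε : ℝ, 0 < ε → ∃ j ∈ J, |z - j| ≤ ε • e}
        zero_mem' := by
          intro ε hε
          exact ⟨0, J.zero_mem, by simpa using smul_nonneg hε.le he⟩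
        add_mem' := by
          intro z w hz hw ε hε
          obtain ⟨jz, hjzJ, hjz⟩ := hz (ε/2) (by positivity)
          obtain ⟨jw, hjwJ, hjw⟩ := hw (ε/2) (by positivity)
          refine ⟨jz + jw, J.add_mem hjzJ hjwJ, ?_⟩
          have hzw : z + w - (jz + jw) = (z - jz) + (w - jw) := by abel
          rw [hzw]
          calc |(z - jz) + (w - jw)| ≤ |z - jz| + |w - jw| := abs_add_le _ _
            _ ≤ (ε/2) • e + (ε/2) • e := add_le_add hjz hjw
            _ = ε • e := by rw [← add_smul]; congr 1; ring
        smul_mem' := by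
          intro c z hz
          rcases eq_or_ne c 0 with rfl | hc
          · intro ε hε
            exact ⟨0, J.zero_mem, by simpa using smul_nonneg hε.le he⟩
          · intro ε hε
            obtain ⟨jz, hjzJ, hjz⟩ := hz (ε/|c|) (div_pos hε (abs_pos.2 hc))
            refine ⟨c • jz, J.smul_mem c hjzJ, ?_⟩
            rw [show c • z - c • jz = c • (z - jz) by rw [smul_sub], abs_smul'']
            have h11 := smul_le_smul_of_nonneg_left hjz (abs_nonneg c)
            rw [smul_smul] at h11
            calc |c| • |z - jz| ≤ (|c| * (ε/|c|)) • e := h11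
              _ = ε • e := by congr 1; field_simp } with hNe
    have hmem : ∀ z : X, z ∈ Ne ↔ ∀ ε : ℝ, 0 < ε → ∃ j ∈ J, |z - j| ≤ ε • e :=
      fun z => Iff.rfl
    have hJNe : J ≤ Ne := by
      intro j hjJ
      rw [hmem]
      intro ε hε
      exact ⟨j, hjJ, by simpa using smul_nonneg hε.le he⟩
    have hxNe : x ∈ Ne := (hmem x).2 hx
    have hNeSolid : IsOrderIdeal Ne := by
      intro z' z h hz
      rw [hmem] at hz ⊢
      intro ε hε
      obtain ⟨j, hjJ, hj⟩ := hz ε hε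
      have hcnn : (0:X) ≤ |j| := abs_nonneg j
      have habsz : |z| ≤ ε • e + |j| := by
        calc |z| = |(z - j) + j| := by rw [sub_add_cancel]
          _ ≤ |z - j| + |j| := abs_add_le _ _
          _ ≤ ε • e + |j| := add_le_add_left hj _
      refine ⟨(z' ⊔ -|j|) ⊓ |j|, ?_, ?_⟩
      · apply hJ _ j _ hjJ
        apply abs_le'.2
        constructor
        · exact inf_le_right
        · rw [neg_le]
          exact le_inf le_sup_right ((neg_nonpos.2 hcnn).trans hcnn)
      · have key1 : z' - (z' ⊔ -|j|) ⊓ |j| = (0 ⊓ (z' + |j|)) ⊔ (z' - |j|) := by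
          rw [sub_inf (z' ⊔ -|j|) |j| z', sub_sup z' (-|j|) z', sub_self, sub_neg_eq_add]
        apply abs_le'.2
        constructor
        · rw [key1]
          apply sup_le
          · exact inf_le_left.trans (smul_nonneg hε.le he)
          · rw [sub_le_iff_le_add]
            calc z' ≤ |z'| := le_abs_self _
              _ ≤ |z| := h
              _ ≤ ε • e + |j| := habsz
        · rw [key1, neg_le]
          refine le_trans (le_inf ?_ ?_) le_sup_left
          · exact neg_nonpos.2 (smul_nonneg hε.le he)
          · have h12 : |z'| ≤ ε • e + |j| := h.trans habsz
            have h13 : -(ε • e + |j|) ≤ -|z'| := neg_le_neg_iff.2 h12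
            have h14 : -|z'| ≤ z' := neg_le.mpr (neg_le_abs z')
            have h11 : -(ε • e + |j|) ≤ z' := h13.trans h14
            calc -(ε • e) = -(ε • e + |j|) + |j| := by abel
              _ ≤ z' + |j| := add_le_add_left h11 _
    have habs : ∀ z, z ∈ Ne → |z| ∈ Ne :=
      fun z hz => hNeSolid |z| z (le_of_eq (abs_abs z)) hz
    have htNe : ∀ k, t k ∈ Ne := by
      intro k
      apply Ne.smul_mem
      exact habs _ (Ne.sub_mem hxNe (hJNe (hbJ k)))
    have hSNe : ∀ n, S n ∈ Ne := by
      intro n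
      rw [hS]
      exact Submodule.sum_mem Ne (fun k _ => htNe k)
    have hLNe : L ∈ Ne := by
      rw [hmem]
      intro ε hε
      obtain ⟨N, hN⟩ := hL (ε/2) (by positivity)
      obtain ⟨j, hjJ, hj⟩ := (hmem (S N)).1 (hSNe N) (ε/2) (by positivity)
      refine ⟨j, hjJ, ?_⟩
      have h13 : L - j = (L - S N) + (S N - j) := by abel
      rw [h13]
      calc |(L - S N) + (S N - j)| ≤ |L - S N| + |S N - j| := abs_add_le _ _
        _ ≤ (ε/2) • e + (ε/2) • e := by
            apply add_le_add _ hj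
            rw [abs_sub_comm]
            exact hN N le_rfl
        _ = ε • e := by rw [← add_smul]; congr 1; ring
    have heNe : e ∉ Ne := by
      intro hcon
      obtain ⟨j, hjJ, hj⟩ := (hmem e).1 hcon (1/2) (by norm_num)
      exact hcase j hjJ hj
    have hNeQ : Ne ≤ Q := by
      intro z hz
      obtain ⟨j, hjJ, hj⟩ := (hmem z).1 hz 1 one_pos
      have hzj : z - j ∈ Q := by
        apply hQ (z - j) e _ heQ
        rw [abs_of_nonneg he]
        simpa using hj
      have hzeq : z = (z - j) + j := by abel
      rw [hzeq]
      exact Q.add_mem hzj (hJQ hjJ)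
    have hmaplt : Ne.map J.mkQ < Q.map J.mkQ := by
      refine lt_of_le_of_ne (Submodule.map_mono hNeQ) ?_
      intro hcon
      apply heNe
      have h1 : J.mkQ e ∈ Q.map J.mkQ := Submodule.mem_map_of_mem heQ
      rw [← hcon] at h1
      obtain ⟨z, hzNe, hze⟩ := h1
      have hk1 : J.mkQ (e - z) = 0 := by rw [map_sub, hze, sub_self]
      have hk2 : e - z ∈ J := by
        have := LinearMap.mem_ker.2 hk1
        rwa [Submodule.ker_mkQ] at this
      have heq : e = z + (e - z) := by abel
      rw [heq]
      exact Ne.add_mem hzNe (hJNe hk2)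
    have hfr : Module.finrank ℝ (Ne.map J.mkQ) < d :=
      lt_of_lt_of_le (Submodule.finrank_lt_finrank_of_lt hmaplt) hrank
    apply IH _ hfr L hLnn Ne hNeSolid hJNe hLNe le_rfl
    intro ε hε
    obtain ⟨k, hk⟩ := exists_pow_lt_of_lt_one hε (show (1:ℝ)/2 < 1 by norm_num)
    exact ⟨b k, hbJ k, (hxk k).trans (smul_le_smul_right_of_nonneg' hk.le hLnn)⟩

end Aux

theorem stmt19 {X : Type*} [AddCommGroup X] [Lattice X]
    [CovariantClass X X (· + ·) (· ≤ ·)] [Module ℝ X] [PosSMulMono ℝ X] (hArch : ArchimedeanVL X) (hcomp : UniformlyCompleteVL X)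
    (J : Submodule ℝ X) (hJ : IsOrderIdeal J) (hfin : FiniteDimensional ℝ (X ⧸ J)) :
    RUClosed (J : Set X) := by
  intro x a e he ha hconv
  have hx : ∀ ε : ℝ, 0 < ε → ∃ c ∈ J, |x - c| ≤ ε • e := by
    intro ε hε
    obtain ⟨N, hN⟩ := hconv ε hε
    exact ⟨a N, ha N, by rw [abs_sub_comm]; exact hN N le_rfl⟩
  exact key_lemma hArch hcomp J hJ hfin x
    (Module.finrank ℝ ((⊤ : Submodule ℝ X).map J.mkQ)) e he ⊤
    (fun u v _ _ => Submodule.mem_top) le_top Submodule.mem_top le_rfl hx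
end
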